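/- arXiv:2204.08819 — 13 statements merged into one kernel-verified Lean document; each statement's English description precedes it below -/
import Mathlib

section
/- Let n ≥ 1, let a, b be real numbers and let C ∈ M_n(ℂ). The 2n×2n block matrix M = [[a·I_n, C],[Cᴴ, b·I_n]] is positive semidefinite if and only if a ≥ 0, b ≥ 0, and ‖C‖² ≤ a·b, where ‖C‖ is the ℓ²→ℓ² operator norm of C. -/
open Matrix
open scoped ComplexOrder
open scoped Matrix.Norms.L2Operator

variable {n : ℕ}

lemma aux_dot_self (v : Fin n → ℂ) :
    star v ⬝ᵥ v = ((‖(WithLp.equiv 2 (Fin n → ℂ)).symm v‖ ^ 2 : ℝ) : ℂ) := by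
  change star v ⬝ᵥ v = ((‖WithLp.toLp 2 v‖ ^ 2 : ℝ) : ℂ)
  rw [dotProduct_comm, ← EuclideanSpace.inner_toLp_toLp, inner_self_eq_norm_sq_to_K]
  norm_cast

lemma aux_dot_CHC (C : Matrix (Fin n) (Fin n) ℂ) (v : Fin n → ℂ) :
    star v ⬝ᵥ ((Cᴴ * C) *ᵥ v) =
      ((‖(WithLp.equiv 2 (Fin n → ℂ)).symm (C *ᵥ v)‖ ^ 2 : ℝ) : ℂ) := by
  rw [← mulVec_mulVec, dotProduct_mulVec, ← star_mulVec, aux_dot_self]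

lemma aux_quadP (a b : ℝ) (C : Matrix (Fin n) (Fin n) ℂ) (v : Fin n → ℂ) :
    star v ⬝ᵥ ((((b:ℂ)) • 1 - (a:ℂ)⁻¹ • (Cᴴ * C)) *ᵥ v) =
      ((b * ‖(WithLp.equiv 2 (Fin n → ℂ)).symm v‖ ^ 2
        - a⁻¹ * ‖(WithLp.equiv 2 (Fin n → ℂ)).symm (C *ᵥ v)‖ ^ 2 : ℝ) : ℂ) := by
  rw [sub_mulVec, dotProduct_sub, smul_mulVec, one_mulVec, dotProduct_smul,
    smul_mulVec, dotProduct_smul, aux_dot_self, aux_dot_CHC]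
  simp only [smul_eq_mul]
  push_cast
  ring

lemma aux_norm_mulVec (C : Matrix (Fin n) (Fin n) ℂ) (v : Fin n → ℂ) :
    ‖(WithLp.equiv 2 (Fin n → ℂ)).symm (C *ᵥ v)‖ ≤
      ‖C‖ * ‖(WithLp.equiv 2 (Fin n → ℂ)).symm v‖ :=
  C.l2_opNorm_mulVec ((WithLp.equiv 2 (Fin n → ℂ)).symm v)

lemma aux_norm_le (C : Matrix (Fin n) (Fin n) ℂ) {c : ℝ} (hc : 0 ≤ c)
    (h : ∀ v : Fin n → ℂ, ‖(WithLp.equiv 2 (Fin n → ℂ)).symm (C *ᵥ v)‖ ≤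
      c * ‖(WithLp.equiv 2 (Fin n → ℂ)).symm v‖) : ‖C‖ ≤ c := by
  rw [Matrix.l2_opNorm_def]
  refine ContinuousLinearMap.opNorm_le_bound _ hc fun x => ?_
  simpa [Matrix.toEuclideanLin_apply] using h ((WithLp.equiv 2 (Fin n → ℂ)) x)

lemma aux_pos_case {a b : ℝ} (ha : 0 < a) (hb : 0 < b) (C : Matrix (Fin n) (Fin n) ℂ) :
    (Matrix.fromBlocks ((a : ℂ) • (1 : Matrix (Fin n) (Fin n) ℂ)) C
      Cᴴ ((b : ℂ) • (1 : Matrix (Fin n) (Fin n) ℂ))).PosSemidef ↔ ‖C‖ ^ 2 ≤ a * b := by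
  have ha' : (a : ℂ) ≠ 0 := by exact_mod_cast ha.ne'
  haveI : Invertible ((a : ℂ) • (1 : Matrix (Fin n) (Fin n) ℂ)) :=
    ⟨(a : ℂ)⁻¹ • 1, by rw [smul_mul_smul_comm, inv_mul_cancel₀ ha', one_mul, one_smul],
      by rw [smul_mul_smul_comm, mul_inv_cancel₀ ha', one_mul, one_smul]⟩
  have hPD : ((a : ℂ) • (1 : Matrix (Fin n) (Fin n) ℂ)).PosDef := by
    refine Matrix.PosDef.of_dotProduct_mulVec_pos ?_ ?_
    · simp [Matrix.IsHermitian, conjTranspose_smul, Complex.star_def, Complex.conj_ofReal]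
    · intro x hx
      rw [smul_mulVec, one_mulVec, dotProduct_smul, smul_eq_mul]
      exact mul_pos (by exact_mod_cast ha) (Matrix.dotProduct_star_self_pos_iff.mpr hx)
  rw [Matrix.PosDef.fromBlocks₁₁ C _ hPD]
  have hinv : ((a : ℂ) • (1 : Matrix (Fin n) (Fin n) ℂ))⁻¹ = (a : ℂ)⁻¹ • 1 :=
    Matrix.inv_eq_left_inv (by rw [smul_mul_smul_comm, inv_mul_cancel₀ ha', one_mul, one_smul])
  have hP : (b:ℂ) • (1 : Matrix (Fin n) (Fin n) ℂ) - Cᴴ * ((a:ℂ) • 1)⁻¹ * C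
      = (b:ℂ) • 1 - (a:ℂ)⁻¹ • (Cᴴ * C) := by
    rw [hinv, Matrix.mul_smul, Matrix.mul_one, Matrix.smul_mul]
  rw [hP]
  constructor
  · intro h
    have key : ∀ v : Fin n → ℂ,
        ‖(WithLp.equiv 2 (Fin n → ℂ)).symm (C *ᵥ v)‖ ^ 2
          ≤ a * b * ‖(WithLp.equiv 2 (Fin n → ℂ)).symm v‖ ^ 2 := by
      intro v
      have h2 := h.dotProduct_mulVec_nonneg v
      rw [aux_quadP] at h2
      rw [Complex.zero_le_real] at h2
      have h3 := mul_le_mul_of_nonneg_left (by linarith :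
        a⁻¹ * ‖(WithLp.equiv 2 (Fin n → ℂ)).symm (C *ᵥ v)‖ ^ 2
          ≤ b * ‖(WithLp.equiv 2 (Fin n → ℂ)).symm v‖ ^ 2) ha.le
      rw [← mul_assoc, mul_inv_cancel₀ ha.ne', one_mul] at h3
      linarith [h3]
    have hnorm : ‖C‖ ≤ Real.sqrt (a * b) := by
      refine aux_norm_le C (Real.sqrt_nonneg _) fun v => ?_
      have h1 := key v
      have := Real.sqrt_le_sqrt h1
      rwa [Real.sqrt_sq (norm_nonneg _), Real.sqrt_mul (by positivity),
        Real.sqrt_sq (norm_nonneg _)] at this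
    calc ‖C‖ ^ 2 ≤ Real.sqrt (a * b) ^ 2 := by
          exact pow_le_pow_left₀ (norm_nonneg _) hnorm 2
      _ = a * b := Real.sq_sqrt (by positivity)
  · intro h
    refine Matrix.PosSemidef.of_dotProduct_mulVec_nonneg ?_ ?_
    · simp [Matrix.IsHermitian, conjTranspose_sub, conjTranspose_smul, conjTranspose_mul,
        conjTranspose_conjTranspose, Complex.star_def, Complex.conj_ofReal, map_inv₀]
    · intro v
      rw [aux_quadP, Complex.zero_le_real]
      have h4 := aux_norm_mulVec C v
      have h5 : ‖(WithLp.equiv 2 (Fin n → ℂ)).symm (C *ᵥ v)‖ ^ 2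
          ≤ a * b * ‖(WithLp.equiv 2 (Fin n → ℂ)).symm v‖ ^ 2 := by
        nlinarith [norm_nonneg ((WithLp.equiv 2 (Fin n → ℂ)).symm (C *ᵥ v)),
          norm_nonneg ((WithLp.equiv 2 (Fin n → ℂ)).symm v), norm_nonneg C]
      have h6 := mul_le_mul_of_nonneg_left h5 (inv_pos.mpr ha).le
      have h7 : a⁻¹ * (a * b * ‖(WithLp.equiv 2 (Fin n → ℂ)).symm v‖ ^ 2)
          = b * ‖(WithLp.equiv 2 (Fin n → ℂ)).symm v‖ ^ 2 := by
        field_simp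
      linarith


lemma aux_smul_one_psd {m : Type*} [Fintype m] [DecidableEq m] {ε : ℝ} (hε : 0 ≤ ε) :
    ((ε : ℂ) • (1 : Matrix m m ℂ)).PosSemidef := by
  refine Matrix.PosSemidef.of_dotProduct_mulVec_nonneg ?_ ?_
  · simp [Matrix.IsHermitian, conjTranspose_smul, Complex.star_def, Complex.conj_ofReal]
  · intro x
    rw [smul_mulVec, one_mulVec, dotProduct_smul, smul_eq_mul]
    exact mul_nonneg (Complex.zero_le_real.mpr hε) (dotProduct_star_self_nonneg x)

lemma aux_limit {m : Type*} [Fintype m] [DecidableEq m] (M : Matrix m m ℂ)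
    (hM : M.IsHermitian) (h : ∀ ε : ℝ, 0 < ε → (M + (ε : ℂ) • 1).PosSemidef) :
    M.PosSemidef := by
  refine Matrix.PosSemidef.of_dotProduct_mulVec_nonneg hM fun x => ?_
  set q : ℂ := star x ⬝ᵥ M *ᵥ x with hq
  have hxx : 0 ≤ star x ⬝ᵥ x := dotProduct_star_self_nonneg x
  rw [Complex.le_def] at hxx
  set N : ℝ := (star x ⬝ᵥ x).re with hN
  have hxx' : star x ⬝ᵥ x = (N : ℂ) := by
    apply Complex.ext <;> simp [hN, ← hxx.2]
  have key : ∀ ε : ℝ, 0 < ε → (0 : ℂ) ≤ q + ((ε * N : ℝ) : ℂ) := by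
    intro ε hε
    have h2 := (h ε hε).dotProduct_mulVec_nonneg x
    rwa [add_mulVec, dotProduct_add, smul_mulVec, one_mulVec, dotProduct_smul,
      smul_eq_mul, hxx', ← Complex.ofReal_mul] at h2
  have him : q.im = 0 := by
    have := (Complex.le_def.mp (key 1 one_pos)).2
    simpa using this.symm
  have hre : 0 ≤ q.re := by
    have hN0 : 0 ≤ N := hxx.1
    refine le_of_forall_pos_le_add fun δ hδ => ?_
    have hN1 : (0:ℝ) < N + 1 := by linarith
    have hε : 0 < δ / (N + 1) := by positivity
    have h2 := (Complex.le_def.mp (key _ hε)).1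
    simp only [Complex.add_re, Complex.ofReal_re, Complex.zero_re] at h2
    have h3 : δ / (N + 1) * N ≤ δ := by
      rw [div_mul_eq_mul_div, div_le_iff₀ hN1]
      nlinarith
    linarith
  rw [Complex.le_def]
  refine ⟨by simpa using hre, by simp [him]⟩

lemma aux_block_add (a b ε : ℝ) (C : Matrix (Fin n) (Fin n) ℂ) :
    Matrix.fromBlocks ((a : ℂ) • (1 : Matrix (Fin n) (Fin n) ℂ)) C
        Cᴴ ((b : ℂ) • (1 : Matrix (Fin n) (Fin n) ℂ)) + (ε : ℂ) • 1 =
      Matrix.fromBlocks (((a + ε : ℝ) : ℂ) • (1 : Matrix (Fin n) (Fin n) ℂ)) C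
        Cᴴ (((b + ε : ℝ) : ℂ) • (1 : Matrix (Fin n) (Fin n) ℂ)) := by
  rw [← Matrix.fromBlocks_one, Matrix.fromBlocks_smul, Matrix.fromBlocks_add]
  push_cast
  simp [add_smul]
/-- Lemma 2 (1): for `a, b : ℝ` and `C : M_n(ℂ)`, the block matrix
`[[a•I, C], [Cᴴ, b•I]]` is positive semidefinite iff `a ≥ 0`, `b ≥ 0` and
`‖C‖² ≤ a·b`, where `‖C‖` is the ℓ²→ℓ² operator norm. -/
theorem stmt0 (n : ℕ) (hn : 1 ≤ n) (a b : ℝ) (C : Matrix (Fin n) (Fin n) ℂ) :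
    (Matrix.fromBlocks ((a : ℂ) • (1 : Matrix (Fin n) (Fin n) ℂ)) C
      Cᴴ ((b : ℂ) • (1 : Matrix (Fin n) (Fin n) ℂ))).PosSemidef ↔
    0 ≤ a ∧ 0 ≤ b ∧ ‖C‖ ^ 2 ≤ a * b := by
  have hn' : (0 : ℝ) < n := by exact_mod_cast hn
  constructor
  · intro h
    have ha : 0 ≤ a := by
      have h2 := h.dotProduct_mulVec_nonneg (Sum.elim (fun _ => (1:ℂ)) 0)
      simp [Function.star_sumElim, Matrix.fromBlocks_mulVec,
        sumElim_dotProduct_sumElim, smul_mulVec, one_mulVec, dotProduct_smul,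
        mulVec_zero, dotProduct_zero, dotProduct, Finset.sum_const, smul_eq_mul] at h2
      rw [show ((n:ℂ) * (a:ℂ)) = (((n : ℝ) * a : ℝ) : ℂ) by push_cast; ring,
        Complex.zero_le_real] at h2
      nlinarith
    have hb : 0 ≤ b := by
      have h2 := h.dotProduct_mulVec_nonneg (Sum.elim 0 (fun _ => (1:ℂ)))
      simp [Function.star_sumElim, Matrix.fromBlocks_mulVec,
        sumElim_dotProduct_sumElim, smul_mulVec, one_mulVec, dotProduct_smul,
        mulVec_zero, dotProduct_zero, dotProduct, Finset.sum_const, smul_eq_mul] at h2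
      rw [show ((n:ℂ) * (b:ℂ)) = (((n : ℝ) * b : ℝ) : ℂ) by push_cast; ring,
        Complex.zero_le_real] at h2
      nlinarith
    refine ⟨ha, hb, ?_⟩
    have key : ∀ ε : ℝ, 0 < ε → ‖C‖ ^ 2 ≤ (a + ε) * (b + ε) := by
      intro ε hε
      refine (aux_pos_case (by linarith) (by linarith) C).mp ?_
      rw [← aux_block_add]
      exact h.add (aux_smul_one_psd hε.le)
    refine le_of_forall_pos_le_add fun δ hδ => ?_
    have hab1 : (0:ℝ) < a + b + 1 := by linarith
    set ε : ℝ := min 1 (δ / (a + b + 1)) with hε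
    have hε0 : 0 < ε := lt_min one_pos (by positivity)
    have hε1 : ε ≤ 1 := min_le_left _ _
    have hε2 : ε ≤ δ / (a + b + 1) := min_le_right _ _
    have h3 := key ε hε0
    have h4 : ε * (a + b + 1) ≤ δ := by
      rw [← le_div_iff₀ hab1]; exact hε2
    nlinarith
  · rintro ⟨ha, hb, hC⟩
    refine aux_limit _ ?_ fun ε hε => ?_
    · simp [Matrix.IsHermitian, Matrix.fromBlocks_conjTranspose, conjTranspose_smul,
        Complex.star_def, Complex.conj_ofReal]
    · rw [aux_block_add]
      exact (aux_pos_case (by linarith) (by linarith) C).mpr (by nlinarith)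
end

section
/- Let n ≥ 1, let a, d ∈ ℂ and let B, C ∈ M_n(ℂ). If the block matrix [[a·I_n, B],[C, d·I_n]] is positive semidefinite, then the block matrix [[a·I_n, (1/4)·Bᵗ],[(1/4)·Cᵗ, d·I_n]] is positive semidefinite. (That is, the map Φ_n on the operator system A_n is positive.) -/
open Matrix
open scoped ComplexOrder

/-- The map `Φ_n` on the operator system `A_n` is positive: if
`[[a•I, B], [C, d•I]]` is positive semidefinite, then so is
`[[a•I, (1/4)•Bᵗ], [(1/4)•Cᵗ, d•I]]`. -/
theorem stmt2 (n : ℕ) (hn : 1 ≤ n) (a d : ℂ) (B C : Matrix (Fin n) (Fin n) ℂ)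
    (h : (Matrix.fromBlocks (a • (1 : Matrix (Fin n) (Fin n) ℂ)) B
      C (d • (1 : Matrix (Fin n) (Fin n) ℂ))).PosSemidef) :
    (Matrix.fromBlocks (a • (1 : Matrix (Fin n) (Fin n) ℂ)) ((1 / 4 : ℂ) • Bᵀ)
      ((1 / 4 : ℂ) • Cᵀ) (d • (1 : Matrix (Fin n) (Fin n) ℂ))).PosSemidef := by
  classical
  obtain ⟨hherm, hpos⟩ := posSemidef_iff_dotProduct_mulVec.mp h
  set i0 : Fin n := ⟨0, hn⟩ with hi0
  -- quadratic form expansion of the hypothesis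
  have key : ∀ p q : Fin n → ℂ,
      0 ≤ a * (star p ⬝ᵥ p) + (star p ⬝ᵥ B *ᵥ q + (star q ⬝ᵥ C *ᵥ p + d * (star q ⬝ᵥ q))) := by
    intro p q
    have h2 := hpos (Sum.elim p q)
    have e : star (Sum.elim p q) ⬝ᵥ
        ((Matrix.fromBlocks (a • (1 : Matrix (Fin n) (Fin n) ℂ)) B
          C (d • (1 : Matrix (Fin n) (Fin n) ℂ))) *ᵥ Sum.elim p q)
        = a * (star p ⬝ᵥ p) + (star p ⬝ᵥ B *ᵥ q + (star q ⬝ᵥ C *ᵥ p + d * (star q ⬝ᵥ q))) := by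
      rw [fromBlocks_mulVec]
      simp [Function.star_sumElim, sumElim_dotProduct_sumElim, dotProduct_add,
        smul_mulVec, one_mulVec, dotProduct_smul, smul_eq_mul]
      ring
    rwa [e] at h2
  -- hermitianity facts
  have hCB : Cᴴ = B := by
    have := congrArg Matrix.toBlocks₁₂ hherm
    rw [fromBlocks_conjTranspose] at this
    simpa [Matrix.toBlocks_fromBlocks₁₂] using this
  have hBC : Bᴴ = C := by rw [← hCB, conjTranspose_conjTranspose]
  -- nonnegativity of a and d
  have hsingle : star (Pi.single i0 (1:ℂ)) ⬝ᵥ (Pi.single i0 (1:ℂ)) = 1 := by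
    simp [dotProduct, Pi.single_apply, apply_ite]
  have ha : 0 ≤ a := by
    have := key (Pi.single i0 1) 0
    simpa [hsingle] using this
  have hd : 0 ≤ d := by
    have := key 0 (Pi.single i0 1)
    simpa [hsingle] using this
  have haim : a.im = 0 := ((Complex.nonneg_iff).mp ha).2.symm
  have hdim : d.im = 0 := ((Complex.nonneg_iff).mp hd).2.symm
  have hare : 0 ≤ a.re := ((Complex.nonneg_iff).mp ha).1
  have hdre : 0 ≤ d.re := ((Complex.nonneg_iff).mp hd).1
  refine posSemidef_iff_dotProduct_mulVec.mpr ⟨?_, ?_⟩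
  · -- Hermitian
    rw [Matrix.IsHermitian, fromBlocks_conjTranspose]
    have ha' : (starRingEnd ℂ) a = a := Complex.conj_eq_iff_im.mpr haim
    have hd' : (starRingEnd ℂ) d = d := Complex.conj_eq_iff_im.mpr hdim
    have hBt : (Bᵀ)ᴴ = Cᵀ := by ext i j; simp [conjTranspose_apply, ← hBC]
    have hCt : (Cᵀ)ᴴ = Bᵀ := by ext i j; simp [conjTranspose_apply, ← hCB]
    rw [conjTranspose_smul, conjTranspose_smul, conjTranspose_smul, conjTranspose_smul,
      conjTranspose_one, hBt, hCt]
    norm_num [ha', hd']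
  · -- positivity
    intro x
    set u : Fin n → ℂ := x ∘ Sum.inl with hu
    set v : Fin n → ℂ := x ∘ Sum.inr with hv
    set P : ℝ := ∑ i, Complex.normSq (u i) with hP
    set Q : ℝ := ∑ i, Complex.normSq (v i) with hQ
    have hPnn : 0 ≤ P := Finset.sum_nonneg fun i _ => Complex.normSq_nonneg _
    have hQnn : 0 ≤ Q := Finset.sum_nonneg fun i _ => Complex.normSq_nonneg _
    have hsu : star u ⬝ᵥ u = (P : ℂ) := by
      simp [dotProduct, hP, ← Complex.normSq_eq_conj_mul_self]
    have hsv : star v ⬝ᵥ v = (Q : ℂ) := by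
      simp [dotProduct, hQ, ← Complex.normSq_eq_conj_mul_self]
    have hus : u ⬝ᵥ star u = (P : ℂ) := by rw [dotProduct_comm, hsu]
    have hvs : v ⬝ᵥ star v = (Q : ℂ) := by rw [dotProduct_comm, hsv]
    set X : ℂ := star u ⬝ᵥ Bᵀ *ᵥ v + star v ⬝ᵥ Cᵀ *ᵥ u with hX
    have hX1 : star u ⬝ᵥ Bᵀ *ᵥ v = v ⬝ᵥ B *ᵥ star u := by
      rw [mulVec_transpose, dotProduct_comm, dotProduct_mulVec]
    have hX2 : star v ⬝ᵥ Cᵀ *ᵥ u = u ⬝ᵥ C *ᵥ star v := by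
      rw [mulVec_transpose, dotProduct_comm, dotProduct_mulVec]
    -- the quadratic family
    have claimC : ∀ t : ℝ, 0 ≤ (a * Q) * (t * t) + X * t + d * P := by
      intro t
      have := key ((t : ℂ) • star v) (star u)
      have e1 : star ((t : ℂ) • star v) = (t : ℂ) • v := by
        simp [star_smul, Complex.star_def, Complex.conj_ofReal]
      rw [e1, star_star] at this
      simp only [smul_dotProduct, dotProduct_smul, mulVec_smul, smul_eq_mul] at this
      rw [hvs, hus] at this
      rw [hX, hX1, hX2]
      have e2 : (a * (Q:ℂ)) * ((t:ℂ) * (t:ℂ)) + (v ⬝ᵥ B *ᵥ star u + u ⬝ᵥ C *ᵥ star v) * (t:ℂ)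
            + d * (P:ℂ)
          = a * ((t:ℂ) * ((t:ℂ) * (Q:ℂ))) + ((t:ℂ) * (v ⬝ᵥ B *ᵥ star u)
            + ((t:ℂ) * (u ⬝ᵥ C *ᵥ star v) + d * (P:ℂ))) := by ring
      rw [e2]
      exact this
    have hXim : X.im = 0 := by
      have h1 := (Complex.nonneg_iff.mp (claimC 1)).2
      simp only [Complex.ofReal_one, mul_one, one_mul, Complex.add_im, Complex.mul_im,
        Complex.ofReal_im, Complex.ofReal_re, haim, hdim] at h1
      linarith [h1]
    have claimR : ∀ t : ℝ, 0 ≤ (a.re * Q) * (t * t) + X.re * t + d.re * P := by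
      intro t
      have := (Complex.nonneg_iff.mp (claimC t)).1
      simpa [Complex.add_re, Complex.mul_re, Complex.ofReal_re, Complex.ofReal_im,
        haim, hdim, hXim, mul_comm] using this
    have hdisc : discrim (a.re * Q) X.re (d.re * P) ≤ 0 := discrim_le_zero claimR
    rw [discrim] at hdisc
    -- expand the goal quadratic form
    have egoal : star x ⬝ᵥ
        ((Matrix.fromBlocks (a • (1 : Matrix (Fin n) (Fin n) ℂ)) ((1 / 4 : ℂ) • Bᵀ)
          ((1 / 4 : ℂ) • Cᵀ) (d • (1 : Matrix (Fin n) (Fin n) ℂ))) *ᵥ x)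
        = a * P + d * Q + (1/4 : ℂ) * X := by
      have hx : x = Sum.elim u v := by
        funext i; cases i <;> rfl
      rw [hx, fromBlocks_mulVec]
      simp only [Sum.elim_comp_inl, Sum.elim_comp_inr]
      rw [Function.star_sumElim, sumElim_dotProduct_sumElim]
      simp only [dotProduct_add, smul_mulVec, one_mulVec, dotProduct_smul, smul_eq_mul]
      rw [hsu, hsv, hX]
      ring
    rw [egoal]
    rw [Complex.nonneg_iff]
    constructor
    · simp only [Complex.add_re, Complex.mul_re, Complex.ofReal_re, Complex.ofReal_im,
        haim, hdim, hXim, Complex.div_re, Complex.one_re, Complex.one_im]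
      have goalre : 0 ≤ a.re * P + d.re * Q + X.re / 4 := by
        nlinarith [sq_nonneg (a.re * P - d.re * Q), sq_nonneg (a.re * P + d.re * Q + X.re),
          mul_nonneg hare hPnn, mul_nonneg hdre hQnn, sq_nonneg X.re,
          mul_nonneg (mul_nonneg hare hPnn) (mul_nonneg hdre hQnn)]
      norm_num
      linarith [goalre]
    · simp [Complex.add_im, Complex.mul_im, haim, hdim, hXim]
end

section
/- For every n > 16, there is no linear map Ψ : M_{2n}(ℂ) → M_{2n}(ℂ) that maps positive semidefinite matrices to positive semidefinite matrices and satisfies Ψ([[a·I_n, B],[C, d·I_n]]) = [[a·I_n, (1/4)·Bᵗ],[(1/4)·Cᵗ, d·I_n]] for all a, d ∈ ℂ and B, C ∈ M_n(ℂ). (That is, the positive unital norm-one map Φ_n admits no positive extension to M_{2n}(ℂ).) -/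
open Matrix
open scoped ComplexOrder

section Aux

variable {ι : Type*} [Fintype ι] [DecidableEq ι]

omit [Fintype ι] in
lemma star_pi_single (x : ι) (e : ℂ) :
    star (Pi.single x e) = (Pi.single x ((starRingEnd ℂ) e) : ι → ℂ) := by
  ext i
  rcases eq_or_ne i x with rfl | h
  · simp
  · simp [Pi.single_eq_of_ne h]

/-- quadratic form of a two-point-supported vector -/
lemma quad_two (R : Matrix ι ι ℂ) (a b : ι) (c d : ℂ) :
    star (Pi.single a c + Pi.single b d) ⬝ᵥ R *ᵥ (Pi.single a c + Pi.single b d)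
      = (starRingEnd ℂ) c * (R a a * c) + (starRingEnd ℂ) c * (R a b * d)
        + (starRingEnd ℂ) d * (R b a * c) + (starRingEnd ℂ) d * (R b b * d) := by
  simp only [star_add, star_pi_single, add_dotProduct, mulVec_add, dotProduct_add,
    mulVec_single, single_dotProduct]
  simp only [Pi.smul_apply, op_smul_eq_mul, Matrix.col_apply]
  ring

lemma psd_diag_nonneg {R : Matrix ι ι ℂ} (hR : R.PosSemidef) (a : ι) : 0 ≤ R a a := by
  have := hR.dotProduct_mulVec_nonneg (Pi.single a 1)
  simpa [star_pi_single, mulVec_single, single_dotProduct] using this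

lemma psd_entry_zero {R : Matrix ι ι ℂ} (hR : R.PosSemidef) {b : ι} (hb : R b b = 0)
    (a : ι) : R a b = 0 := by
  rcases eq_or_ne a b with rfl | hab
  · exact hb
  by_contra h
  have hns : 0 < Complex.normSq (R a b) := Complex.normSq_pos.mpr h
  set t : ℝ := ((R a a).re + 1) / 2 with ht
  have hq := hR.dotProduct_mulVec_nonneg (Pi.single a (R a b) + Pi.single b (-(t : ℂ)))
  rw [quad_two R a b] at hq
  have hba : R b a = (starRingEnd ℂ) (R a b) := by
    rw [← hR.1.apply b a, Complex.star_def]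
  have key : (starRingEnd ℂ) (R a b) * (R a a * R a b) +
      (starRingEnd ℂ) (R a b) * (R a b * (-(t:ℂ))) +
      (starRingEnd ℂ) (-(t:ℂ)) * (R b a * R a b) +
      (starRingEnd ℂ) (-(t:ℂ)) * (R b b * (-(t:ℂ)))
      = (Complex.normSq (R a b) : ℂ) * (R a a - 2 * (t:ℂ)) := by
    rw [hb, hba]
    simp only [map_neg, Complex.conj_ofReal, mul_zero, zero_mul]
    linear_combination (R a a - 2 * (t:ℂ)) * Complex.mul_conj (R a b)
  rw [key] at hq
  have hre := (Complex.le_def.mp hq).1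
  rw [Complex.re_ofReal_mul] at hre
  have h2 : ((R a a - 2 * (t:ℂ))).re = (R a a).re - 2 * t := by simp
  rw [h2, ht] at hre
  simp at hre
  nlinarith [hre, hns]

/-- rank-one outer products are PSD -/
lemma outer_psd (v : ι → ℂ) :
    (Matrix.of fun i j => v i * (starRingEnd ℂ) (v j)).PosSemidef := by
  have h : (Matrix.of fun i j => v i * (starRingEnd ℂ) (v j))
      = (Matrix.of fun (_ : Unit) i => (starRingEnd ℂ) (v i))ᴴ *
        (Matrix.of fun (_ : Unit) i => (starRingEnd ℂ) (v i)) := by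
    ext i j
    simp [Matrix.mul_apply, conjTranspose_apply, mul_comm]
  rw [h]
  exact posSemidef_conjTranspose_mul_self _

end Aux

set_option maxHeartbeats 1000000 in
/-- For `n > 16` there is no positive (i.e. positive-semidefinite-preserving) linear
map `Ψ` on `M_{2n}(ℂ)` extending the map `Φ_n` on the operator system `A_n`. -/
theorem stmt4 (n : ℕ) (hn : 16 < n) :
    ¬ ∃ Ψ : Matrix (Fin n ⊕ Fin n) (Fin n ⊕ Fin n) ℂ →ₗ[ℂ]
        Matrix (Fin n ⊕ Fin n) (Fin n ⊕ Fin n) ℂ,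
      (∀ M : Matrix (Fin n ⊕ Fin n) (Fin n ⊕ Fin n) ℂ, M.PosSemidef → (Ψ M).PosSemidef) ∧
      (∀ (a d : ℂ) (B C : Matrix (Fin n) (Fin n) ℂ),
        Ψ (Matrix.fromBlocks (a • (1 : Matrix (Fin n) (Fin n) ℂ)) B
            C (d • (1 : Matrix (Fin n) (Fin n) ℂ))) =
          Matrix.fromBlocks (a • (1 : Matrix (Fin n) (Fin n) ℂ)) ((1 / 4 : ℂ) • Bᵀ)
            ((1 / 4 : ℂ) • Cᵀ) (d • (1 : Matrix (Fin n) (Fin n) ℂ))) := by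
  rintro ⟨Ψ, hpos, hext⟩
  have hn0 : 0 < n := by omega
  set j0 : Fin n := ⟨0, hn0⟩ with hj0
  set E : Fin n → Fin n → Matrix (Fin n) (Fin n) ℂ :=
    fun i j => Matrix.of fun a b => if a = i ∧ b = j then 1 else 0 with hE
  set P : Matrix (Fin n ⊕ Fin n) (Fin n ⊕ Fin n) ℂ := fromBlocks 1 0 0 0 with hP
  set P' : Matrix (Fin n ⊕ Fin n) (Fin n ⊕ Fin n) ℂ := fromBlocks 0 0 0 1 with hP'
  set D : Fin n → Matrix (Fin n ⊕ Fin n) (Fin n ⊕ Fin n) ℂ :=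
    fun k => fromBlocks (E k k) 0 0 0 with hD
  set F : Matrix (Fin n ⊕ Fin n) (Fin n ⊕ Fin n) ℂ := fromBlocks 0 0 0 (E j0 j0) with hF
  set M : Fin n → Matrix (Fin n ⊕ Fin n) (Fin n ⊕ Fin n) ℂ :=
    fun k => fromBlocks (E k k) (E k j0) (E j0 k) (E j0 j0) with hM
  -- Ψ fixes P and P'
  have hΨP : Ψ P = P := by
    have h := hext 1 0 0 0
    simpa using h
  have hΨP' : Ψ P' = P' := by
    have h := hext 0 1 0 0
    simpa using h
  -- PSD facts
  have hDpsd : ∀ k, (D k).PosSemidef := by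
    intro k
    have heq : D k = Matrix.of fun i j =>
        (Sum.elim (Pi.single k (1:ℂ)) 0 : Fin n ⊕ Fin n → ℂ) i *
        (starRingEnd ℂ) ((Sum.elim (Pi.single k (1:ℂ)) 0 : Fin n ⊕ Fin n → ℂ) j) := by
      ext i j
      rcases i with i | i <;> rcases j with j | j <;>
        simp [hD, hE, Pi.single_apply, apply_ite, ite_and] <;>
        split_ifs <;> simp_all
    rw [heq]; exact outer_psd _
  have hFpsd : F.PosSemidef := by
    have heq : F = Matrix.of fun i j =>
        (Sum.elim 0 (Pi.single j0 (1:ℂ)) : Fin n ⊕ Fin n → ℂ) i *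
        (starRingEnd ℂ) ((Sum.elim 0 (Pi.single j0 (1:ℂ)) : Fin n ⊕ Fin n → ℂ) j) := by
      ext i j
      rcases i with i | i <;> rcases j with j | j <;>
        simp [hF, hE, Pi.single_apply, apply_ite, ite_and] <;>
        split_ifs <;> simp_all
    rw [heq]; exact outer_psd _
  have hMpsd : ∀ k, (M k).PosSemidef := by
    intro k
    have heq : M k = Matrix.of fun i j =>
        (Sum.elim (Pi.single k (1:ℂ)) (Pi.single j0 (1:ℂ)) : Fin n ⊕ Fin n → ℂ) i *
        (starRingEnd ℂ) ((Sum.elim (Pi.single k (1:ℂ)) (Pi.single j0 (1:ℂ)) :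
          Fin n ⊕ Fin n → ℂ) j) := by
      ext i j
      rcases i with i | i <;> rcases j with j | j <;>
        simp [hM, hE, Pi.single_apply, apply_ite, ite_and] <;>
        split_ifs <;> simp_all
    rw [heq]; exact outer_psd _
  have hPDpsd : ∀ k, (P - D k).PosSemidef := by
    intro k
    have heq : P - D k = diagonal (Sum.elim (fun i => if i = k then 0 else 1) 0) := by
      ext i j
      rcases i with i | i <;> rcases j with j | j <;>
        simp [hP, hD, hE, Matrix.diagonal_apply, Matrix.one_apply, Sum.inl.injEq] <;>
        split_ifs <;> simp_all
    rw [heq]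
    refine PosSemidef.diagonal ?_
    intro x
    rcases x with x | x <;> dsimp <;> [skip; exact le_refl 0]
    split_ifs <;> simp
  have hPFpsd : (P' - F).PosSemidef := by
    have heq : P' - F = diagonal (Sum.elim 0 (fun i => if i = j0 then 0 else 1)) := by
      ext i j
      rcases i with i | i <;> rcases j with j | j <;>
        simp [hP', hF, hE, Matrix.diagonal_apply, Matrix.one_apply, Sum.inr.injEq] <;>
        split_ifs <;> simp_all
    rw [heq]
    refine PosSemidef.diagonal ?_
    intro x
    rcases x with x | x <;> dsimp <;> [exact le_refl 0; skip]
    split_ifs <;> simp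
  -- the sum of the D k is P
  have hsumD : ∑ k, D k = P := by
    ext i j
    rw [Matrix.sum_apply]
    rcases i with i | i <;> rcases j with j | j <;>
      simp [hP, hD, hE, Matrix.one_apply, ite_and]
    rcases eq_or_ne i j with rfl | hij
    · simp
    · simp [hij, Finset.sum_ite_eq, if_neg (Ne.symm hij)]
  -- diagonal entries
  set s : Fin n → ℂ := fun k => Ψ (D k) (Sum.inl j0) (Sum.inl j0) with hs
  have hs_nonneg : ∀ k, 0 ≤ (s k).re := by
    intro k
    exact (Complex.le_def.mp (psd_diag_nonneg (hpos _ (hDpsd k)) (Sum.inl j0))).1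
  have hsum1 : ∑ k, (s k).re = 1 := by
    have h1 : ∑ k, Ψ (D k) = P := by rw [← map_sum, hsumD, hΨP]
    have h2 : (∑ k, Ψ (D k)) (Sum.inl j0) (Sum.inl j0) = 1 := by
      rw [h1]; simp [hP, Matrix.one_apply]
    rw [Matrix.sum_apply] at h2
    have h3 := congrArg Complex.re h2
    rw [Complex.re_sum] at h3
    simpa using h3
  -- pick k with small diagonal entry
  have hex : ∃ k, (s k).re ≤ 1 / n := by
    by_contra hcon
    push_neg at hcon
    have h4 : (1:ℝ) < ∑ k : Fin n, (s k).re := by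
      calc (1:ℝ) = ∑ _k : Fin n, (1 / n : ℝ) := by
            rw [Finset.sum_const]
            simp [Finset.card_univ]
            field_simp
        _ < ∑ k, (s k).re := by
            refine Finset.sum_lt_sum_of_nonempty ?_ fun k _ => hcon k
            exact ⟨j0, Finset.mem_univ j0⟩
    rw [hsum1] at h4
    exact absurd h4 (lt_irrefl 1)
  obtain ⟨k, hk⟩ := hex
  set a : Fin n ⊕ Fin n := Sum.inl j0 with ha
  set b : Fin n ⊕ Fin n := Sum.inr k with hb
  have hΨD := hpos _ (hDpsd k)
  have hΨF := hpos _ hFpsd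
  -- Ψ (D k) vanishes at the (b,b) entry, hence on the b column/row
  have hDbb : Ψ (D k) b b = 0 := by
    have h1 : 0 ≤ Ψ (D k) b b := psd_diag_nonneg hΨD b
    have h2 : 0 ≤ (Ψ P - Ψ (D k)) b b := by
      rw [← map_sub]
      exact psd_diag_nonneg (hpos _ (hPDpsd k)) b
    have h3 : (Ψ P - Ψ (D k)) b b = - Ψ (D k) b b := by
      rw [Matrix.sub_apply, hΨP]
      simp [hP, hb]
    rw [h3] at h2
    exact le_antisymm (neg_nonneg.mp h2) h1
  have hDab : Ψ (D k) a b = 0 := psd_entry_zero hΨD hDbb a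
  have hDba : Ψ (D k) b a = 0 := by
    rw [← hΨD.1.apply b a, hDab]
    simp
  -- Ψ F vanishes at the (a,a) entry, hence on the a column/row
  have hFaa : Ψ F a a = 0 := by
    have h1 : 0 ≤ Ψ F a a := psd_diag_nonneg hΨF a
    have h2 : 0 ≤ (Ψ P' - Ψ F) a a := by
      rw [← map_sub]
      exact psd_diag_nonneg (hpos _ hPFpsd) a
    have h3 : (Ψ P' - Ψ F) a a = - Ψ F a a := by
      rw [Matrix.sub_apply, hΨP']
      simp [hP', ha]
    rw [h3] at h2
    exact le_antisymm (neg_nonneg.mp h2) h1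
  have hFba : Ψ F b a = 0 := psd_entry_zero hΨF hFaa b
  have hFab : Ψ F a b = 0 := by
    rw [← hΨF.1.apply a b, hFba]
    simp
  -- bound for the (b,b) entry of Ψ F
  have hτ : (Ψ F b b).re ≤ 1 := by
    have h2 : 0 ≤ (Ψ P' - Ψ F) b b := by
      rw [← map_sub]
      exact psd_diag_nonneg (hpos _ hPFpsd) b
    have h3 : (Ψ P' - Ψ F) b b = 1 - Ψ F b b := by
      rw [Matrix.sub_apply, hΨP']
      simp [hP', hb, Matrix.one_apply]
    rw [h3] at h2
    have := (Complex.le_def.mp h2).1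
    simp at this
    linarith
  -- decomposition of Ψ (M k)
  set Off : Matrix (Fin n ⊕ Fin n) (Fin n ⊕ Fin n) ℂ :=
    fromBlocks 0 ((1/4 : ℂ) • (E k j0)ᵀ) ((1/4 : ℂ) • (E j0 k)ᵀ) 0 with hOff
  have hoffval : Ψ (fromBlocks 0 (E k j0) (E j0 k) 0) = Off := by
    have h := hext 0 0 (E k j0) (E j0 k)
    rw [hOff]
    simpa [one_div] using h
  have hMdec : M k = D k + fromBlocks 0 (E k j0) (E j0 k) 0 + F := by
    ext i j
    rcases i with i | i <;> rcases j with j | j <;>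
      simp [hM, hD, hF]
  have hΨM : Ψ (M k) = Ψ (D k) + Off + Ψ F := by
    rw [hMdec, map_add, map_add, hoffval]
  -- entries of Ψ (M k)
  have hOffaa : Off a a = 0 := by simp [hOff, ha]
  have hOffbb : Off b b = 0 := by simp [hOff, hb]
  have hOffab : Off a b = 1/4 := by
    simp [hOff, ha, hb, hE, Matrix.transpose_apply]
  have hOffba : Off b a = 1/4 := by
    simp [hOff, ha, hb, hE, Matrix.transpose_apply]
  have hAaa : Ψ (M k) a a = s k := by
    rw [hΨM]
    simp [Matrix.add_apply, hOffaa, hFaa, hs]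
  have hAab : Ψ (M k) a b = 1/4 := by
    rw [hΨM]
    simp [Matrix.add_apply, hOffab, hFab, hDab]
  have hAba : Ψ (M k) b a = 1/4 := by
    rw [hΨM]
    simp [Matrix.add_apply, hOffba, hFba, hDba]
  have hAbb : Ψ (M k) b b = Ψ F b b := by
    rw [hΨM]
    simp [Matrix.add_apply, hOffbb, hDbb]
  -- the final quadratic form estimate
  have hq := (hpos _ (hMpsd k)).dotProduct_mulVec_nonneg (Pi.single a ((n:ℂ)/4) + Pi.single b (-1))
  rw [quad_two _ a b] at hq
  rw [hAaa, hAab, hAba, hAbb] at hq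
  have hcn : (starRingEnd ℂ) ((n:ℂ)/4) = (n:ℂ)/4 := by
    rw [map_div₀, Complex.conj_natCast, Complex.conj_ofNat]
  have hval : (starRingEnd ℂ) ((n:ℂ)/4) * (s k * ((n:ℂ)/4)) +
      (starRingEnd ℂ) ((n:ℂ)/4) * ((1/4 : ℂ) * (-1)) +
      (starRingEnd ℂ) (-1 : ℂ) * ((1/4 : ℂ) * ((n:ℂ)/4)) +
      (starRingEnd ℂ) (-1 : ℂ) * (Ψ F b b * (-1))
      = (((n:ℝ)^2/16 : ℝ) : ℂ) * s k - (((n:ℝ)/8 : ℝ) : ℂ) + Ψ F b b := by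
    rw [hcn]
    simp only [_root_.map_neg, _root_.map_one]
    push_cast
    ring
  rw [hval] at hq
  have hre := (Complex.le_def.mp hq).1
  simp only [Complex.add_re, Complex.sub_re, Complex.re_ofReal_mul, Complex.ofReal_re,
    Complex.zero_re] at hre
  -- now derive the numeric contradiction
  have hnR : (16:ℝ) < n := by exact_mod_cast hn
  have hsk := hs_nonneg k
  have h5 : (s k).re * (n:ℝ) ≤ 1 := by
    rw [le_div_iff₀ (by positivity : (0:ℝ) < (n:ℝ))] at hk
    exact hk
  nlinarith [hre, hτ, hsk, h5, hnR]
end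

section
/- Let n ≥ 1, let a, b ∈ ℝ and let C ∈ M_n(ℝ). If the real block matrix [[a·I_n, C],[Cᵗ, b·I_n]] is positive semidefinite, then the block matrix [[a·I_n, Cᵗ],[C, b·I_n]] is positive semidefinite. (That is, the map Υ_n on the real operator system S_n is positivity preserving.) -/
open Matrix

private lemma quad_key {n : ℕ} {a b : ℝ} {C : Matrix (Fin n) (Fin n) ℝ}
    (h : (Matrix.fromBlocks (a • (1 : Matrix (Fin n) (Fin n) ℝ)) C
      Cᵀ (b • (1 : Matrix (Fin n) (Fin n) ℝ))).PosSemidef) (u v : Fin n → ℝ) :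
    0 ≤ a * (u ⬝ᵥ u) + b * (v ⬝ᵥ v) + 2 * (u ⬝ᵥ C *ᵥ v) := by
  have key := h.dotProduct_mulVec_nonneg (Sum.elim u v)
  simp only [star_trivial, fromBlocks_mulVec, sumElim_dotProduct_sumElim,
    Sum.elim_comp_inl, Sum.elim_comp_inr,
    dotProduct_add, smul_mulVec, one_mulVec, dotProduct_smul, smul_eq_mul] at key
  have huv : v ⬝ᵥ Cᵀ *ᵥ u = u ⬝ᵥ C *ᵥ v := by
    rw [mulVec_transpose, dotProduct_comm, dotProduct_mulVec]
  linarith [key, huv.ge, huv.le]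

/-- The map `Υ_n` on the real operator system `S_n` is positivity preserving: if the
real block matrix `[[a•I, C], [Cᵗ, b•I]]` is positive semidefinite, then so is
`[[a•I, Cᵗ], [C, b•I]]`. -/
theorem stmt6 (n : ℕ) (hn : 1 ≤ n) (a b : ℝ) (C : Matrix (Fin n) (Fin n) ℝ)
    (h : (Matrix.fromBlocks (a • (1 : Matrix (Fin n) (Fin n) ℝ)) C
      Cᵀ (b • (1 : Matrix (Fin n) (Fin n) ℝ))).PosSemidef) :
    (Matrix.fromBlocks (a • (1 : Matrix (Fin n) (Fin n) ℝ)) Cᵀ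
      C (b • (1 : Matrix (Fin n) (Fin n) ℝ))).PosSemidef := by
  haveI : NeZero n := ⟨by omega⟩
  -- nonnegativity of a and b via a unit vector
  set e : Fin n → ℝ := Pi.single 0 1 with he
  have hee : e ⬝ᵥ e = 1 := by
    simp [he, dotProduct, Pi.single_apply]
  have ha : 0 ≤ a := by
    have := quad_key h e 0
    simp [hee] at this
    linarith
  have hb : 0 ≤ b := by
    have := quad_key h 0 e
    simp [hee] at this
    linarith
  refine posSemidef_iff_dotProduct_mulVec.mpr ⟨?_, ?_⟩
  · rw [isHermitian_fromBlocks_iff]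
    refine ⟨?_, rfl, rfl, ?_⟩ <;>
      simp [IsHermitian, conjTranspose_smul, conjTranspose_one]
  · intro x
    set u : Fin n → ℝ := x ∘ Sum.inl with hu
    set v : Fin n → ℝ := x ∘ Sum.inr with hv
    have hx : Sum.elim u v = x := Sum.elim_comp_inl_inr x
    rw [← hx]
    simp only [star_trivial, fromBlocks_mulVec, sumElim_dotProduct_sumElim,
      Sum.elim_comp_inl, Sum.elim_comp_inr,
      dotProduct_add, smul_mulVec, one_mulVec, dotProduct_smul, smul_eq_mul]
    have htr : u ⬝ᵥ Cᵀ *ᵥ v = v ⬝ᵥ C *ᵥ u := by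
      rw [mulVec_transpose, dotProduct_comm, dotProduct_mulVec]
    set P : ℝ := u ⬝ᵥ u with hP
    set Q : ℝ := v ⬝ᵥ v with hQ
    set S : ℝ := v ⬝ᵥ C *ᵥ u with hS
    have hPnn : 0 ≤ P := by simpa using dotProduct_self_star_nonneg u
    have hQnn : 0 ≤ Q := by simpa using dotProduct_self_star_nonneg v
    have key : ∀ t : ℝ, 0 ≤ a * Q * (t * t) + 2 * S * t + b * P := by
      intro t
      have k := quad_key h (t • v) u
      have e1 : (t • v) ⬝ᵥ (t • v) = t * t * Q := by
        simp [hQ, smul_dotProduct, dotProduct_smul, smul_eq_mul]; ring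
      have e2 : (t • v) ⬝ᵥ C *ᵥ u = t * S := by
        simp [hS, smul_dotProduct, smul_eq_mul]
      rw [e1, e2] at k
      nlinarith [k]
    have hdisc : discrim (a * Q) (2 * S) (b * P) ≤ 0 := discrim_le_zero key
    rw [discrim] at hdisc
    have hS2 : S ^ 2 ≤ a * Q * (b * P) := by nlinarith [hdisc]
    have main : 0 ≤ a * P + b * Q + 2 * S := by
      nlinarith [hS2, sq_nonneg (a * P - b * Q), mul_nonneg (mul_nonneg ha hPnn) (mul_nonneg hb hQnn),
        mul_nonneg ha hPnn, mul_nonneg hb hQnn, sq_nonneg (a * P + b * Q)]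
    linarith [htr.ge, htr.le, main]
end

section
/- Let n ≥ 1, let a, b ∈ ℝ and let C ∈ M_n(ℝ). Then ‖[[a·I_n, Cᵗ],[C, b·I_n]]‖ = ‖[[a·I_n, C],[Cᵗ, b·I_n]]‖, where ‖·‖ is the ℓ²→ℓ² operator norm on M_{2n}(ℝ). (That is, the positivity preserving unital involution Υ_n on S_n is an isometry, so it has norm 1.) -/
open Matrix
open scoped Matrix.Norms.L2Operator

section Aux

variable {m : Type*} [Fintype m] [DecidableEq m]

private lemma det_smul_one_sub_mul_comm (s : ℝ) (X Y : Matrix m m ℝ) :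
    (s • (1 : Matrix m m ℝ) - X * Y).det = (s • (1 : Matrix m m ℝ) - Y * X).det := by
  rcases eq_or_ne s 0 with rfl | hs
  · simp only [zero_smul, zero_sub, det_neg, det_mul]
    ring
  · have h1 : s • (1 : Matrix m m ℝ) - X * Y
        = s • ((1 : Matrix m m ℝ) - (s⁻¹ • X) * Y) := by
      rw [smul_sub, smul_mul_assoc, smul_smul, mul_inv_cancel₀ hs, one_smul]
    have h2 : s • (1 : Matrix m m ℝ) - Y * X
        = s • ((1 : Matrix m m ℝ) - Y * (s⁻¹ • X)) := by
      rw [smul_sub, mul_smul_comm, smul_smul, mul_inv_cancel₀ hs, one_smul]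
    rw [h1, h2, det_smul, det_smul, det_one_sub_mul_comm]

private lemma det_fromBlocks_smul_one₁₁ {α β : ℝ} (hα : α ≠ 0)
    (B C : Matrix m m ℝ) :
    (fromBlocks (α • (1 : Matrix m m ℝ)) B C (β • (1 : Matrix m m ℝ))).det
      = ((α * β) • (1 : Matrix m m ℝ) - C * B).det := by
  letI : Invertible (α • (1 : Matrix m m ℝ)) :=
    ⟨α⁻¹ • (1 : Matrix m m ℝ),
      by rw [smul_mul_smul_comm, one_mul, inv_mul_cancel₀ hα, one_smul],
      by rw [smul_mul_smul_comm, one_mul, mul_inv_cancel₀ hα, one_smul]⟩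
  have hinv : ⅟(α • (1 : Matrix m m ℝ)) = α⁻¹ • (1 : Matrix m m ℝ) := rfl
  rw [det_fromBlocks₁₁, hinv]
  have h3 : C * (α⁻¹ • (1 : Matrix m m ℝ)) * B = α⁻¹ • (C * B) := by
    rw [mul_smul_comm, mul_one, smul_mul_assoc]
  have h4 : β • (1 : Matrix m m ℝ) - α⁻¹ • (C * B)
      = α⁻¹ • ((α * β) • (1 : Matrix m m ℝ) - C * B) := by
    rw [smul_sub, smul_smul, inv_mul_cancel_left₀ hα]
  rw [h3, h4, det_smul, det_smul, det_one, mul_one]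
  rw [← mul_assoc, ← mul_pow, mul_inv_cancel₀ hα, one_pow, one_mul]

private lemma det_fromBlocks_smul_one₂₂ {α β : ℝ} (hβ : β ≠ 0)
    (B C : Matrix m m ℝ) :
    (fromBlocks (α • (1 : Matrix m m ℝ)) B C (β • (1 : Matrix m m ℝ))).det
      = ((α * β) • (1 : Matrix m m ℝ) - B * C).det := by
  letI : Invertible (β • (1 : Matrix m m ℝ)) :=
    ⟨β⁻¹ • (1 : Matrix m m ℝ),
      by rw [smul_mul_smul_comm, one_mul, inv_mul_cancel₀ hβ, one_smul],
      by rw [smul_mul_smul_comm, one_mul, mul_inv_cancel₀ hβ, one_smul]⟩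
  have hinv : ⅟(β • (1 : Matrix m m ℝ)) = β⁻¹ • (1 : Matrix m m ℝ) := rfl
  rw [det_fromBlocks₂₂, hinv]
  have h3 : B * (β⁻¹ • (1 : Matrix m m ℝ)) * C = β⁻¹ • (B * C) := by
    rw [mul_smul_comm, mul_one, smul_mul_assoc]
  have h4 : α • (1 : Matrix m m ℝ) - β⁻¹ • (B * C)
      = β⁻¹ • ((α * β) • (1 : Matrix m m ℝ) - B * C) := by
    rw [smul_sub, smul_smul, mul_comm α β, inv_mul_cancel_left₀ hβ]
  rw [h3, h4, det_smul, det_smul, det_one, mul_one]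
  rw [← mul_assoc, ← mul_pow, mul_inv_cancel₀ hβ, one_pow, one_mul]

private lemma det_blocks_swap (α β : ℝ) (D : Matrix m m ℝ) :
    (fromBlocks (α • (1 : Matrix m m ℝ)) Dᵀ D (β • (1 : Matrix m m ℝ))).det
      = (fromBlocks (α • (1 : Matrix m m ℝ)) D Dᵀ (β • (1 : Matrix m m ℝ))).det := by
  rcases eq_or_ne α 0 with rfl | hα
  · rcases eq_or_ne β 0 with rfl | hβ
    · -- conjugate by the block swap matrix P
      set P : Matrix (m ⊕ m) (m ⊕ m) ℝ := fromBlocks 0 1 1 0 with hPdef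
      have hPP : P * P = 1 := by
        rw [hPdef, fromBlocks_multiply]
        simp [fromBlocks_one]
      have hconj : fromBlocks ((0:ℝ) • (1 : Matrix m m ℝ)) Dᵀ D ((0:ℝ) • (1 : Matrix m m ℝ))
          = P * (fromBlocks ((0:ℝ) • (1 : Matrix m m ℝ)) D Dᵀ ((0:ℝ) • (1 : Matrix m m ℝ))) * P := by
        rw [hPdef, fromBlocks_multiply, fromBlocks_multiply]
        simp
      rw [hconj, det_mul, det_mul]
      have hdetP : P.det * P.det = 1 := by rw [← det_mul, hPP, det_one]
      calc P.det * (fromBlocks ((0:ℝ) • (1 : Matrix m m ℝ)) D Dᵀ ((0:ℝ) • (1 : Matrix m m ℝ))).det * P.det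
          = (P.det * P.det) * (fromBlocks ((0:ℝ) • (1 : Matrix m m ℝ)) D Dᵀ ((0:ℝ) • (1 : Matrix m m ℝ))).det := by ring
        _ = _ := by rw [hdetP, one_mul]
    · rw [det_fromBlocks_smul_one₂₂ hβ, det_fromBlocks_smul_one₂₂ hβ,
        det_smul_one_sub_mul_comm]
  · rw [det_fromBlocks_smul_one₁₁ hα, det_fromBlocks_smul_one₁₁ hα,
      det_smul_one_sub_mul_comm]

private lemma l2_opNorm_diagonal_le (d : m → ℝ) {M : ℝ} (hM : 0 ≤ M)
    (h : ∀ i, |d i| ≤ M) : ‖diagonal d‖ ≤ M := by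
  rw [Matrix.l2_opNorm_def]
  refine ContinuousLinearMap.opNorm_le_bound _ hM fun x => ?_
  have hx : ‖x‖ = Real.sqrt (∑ i, ‖x i‖ ^ 2) := EuclideanSpace.norm_eq x
  have happ : ((Matrix.toEuclideanLin.trans LinearMap.toContinuousLinearMap)
      (diagonal d)) x = Matrix.toEuclideanLin (diagonal d) x := rfl
  rw [happ]
  have hnorm : ‖Matrix.toEuclideanLin (diagonal d) x‖
      = Real.sqrt (∑ i, ‖d i * x i‖ ^ 2) := by
    rw [EuclideanSpace.norm_eq]
    congr 1
    refine Finset.sum_congr rfl fun i _ => ?_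
    congr 1
    show ‖(diagonal d *ᵥ _) i‖ = _
    rw [mulVec_diagonal]
    rfl
  rw [hnorm, hx]
  rw [← Real.sqrt_sq hM, ← Real.sqrt_mul (sq_nonneg M), Finset.mul_sum]
  apply Real.sqrt_le_sqrt
  refine Finset.sum_le_sum fun i _ => ?_
  have h1 : ‖d i * x i‖ ≤ M * ‖x i‖ := by
    rw [Real.norm_eq_abs, abs_mul]
    exact mul_le_mul_of_nonneg_right (h i) (abs_nonneg _)
  calc ‖d i * x i‖ ^ 2 ≤ (M * ‖x i‖) ^ 2 := by
        exact pow_le_pow_left₀ (norm_nonneg _) h1 2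
    _ = M ^ 2 * ‖x i‖ ^ 2 := by ring

private lemma exists_mem_spectrum_abs_eq_norm [Nonempty m] {A : Matrix m m ℝ}
    (hA : A.IsHermitian) : ∃ μ ∈ spectrum ℝ A, |μ| = ‖A‖ := by
  haveI : Nontrivial (Matrix m m ℝ) := by
    obtain ⟨i⟩ := ‹Nonempty m›
    exact ⟨0, 1, fun h => by
      have h' := congrFun (congrFun h i) i
      simp [Matrix.one_apply] at h'⟩
  obtain ⟨i₀, -, hi₀⟩ := Finset.exists_max_image Finset.univ
    (fun i => |hA.eigenvalues i|) ⟨Classical.arbitrary m, Finset.mem_univ _⟩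
  refine ⟨hA.eigenvalues i₀, hA.eigenvalues_mem_spectrum_real i₀, le_antisymm ?_ ?_⟩
  · simpa [Real.norm_eq_abs] using
      spectrum.norm_le_norm_of_mem (hA.eigenvalues_mem_spectrum_real i₀)
  · conv_lhs => rw [hA.spectral_theorem, Unitary.conjStarAlgAut_apply]
    rw [CStarRing.norm_mul_mem_unitary _ (Unitary.star_mem (hA.eigenvectorUnitary).prop),
      CStarRing.norm_mem_unitary_mul _ (hA.eigenvectorUnitary).prop]
    have hdiag : (diagonal (RCLike.ofReal ∘ hA.eigenvalues) : Matrix m m ℝ)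
        = diagonal hA.eigenvalues := by
      congr 1
    rw [hdiag]
    exact l2_opNorm_diagonal_le _ (abs_nonneg _) fun i => hi₀ i (Finset.mem_univ i)

end Aux

/-- The map `Υ_n` on the real operator system `S_n` is an isometry for the ℓ²→ℓ²
operator norm: `‖[[a•I, Cᵗ], [C, b•I]]‖ = ‖[[a•I, C], [Cᵗ, b•I]]‖`. -/
theorem stmt7 (n : ℕ) (hn : 1 ≤ n) (a b : ℝ) (C : Matrix (Fin n) (Fin n) ℝ) :
    ‖Matrix.fromBlocks (a • (1 : Matrix (Fin n) (Fin n) ℝ)) Cᵀ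
        C (b • (1 : Matrix (Fin n) (Fin n) ℝ))‖ =
      ‖Matrix.fromBlocks (a • (1 : Matrix (Fin n) (Fin n) ℝ)) C
        Cᵀ (b • (1 : Matrix (Fin n) (Fin n) ℝ))‖ := by
  haveI : Nonempty (Fin n) := ⟨⟨0, hn⟩⟩
  set M₁ : Matrix (Fin n ⊕ Fin n) (Fin n ⊕ Fin n) ℝ :=
    fromBlocks (a • 1) Cᵀ C (b • 1) with hM₁
  set M₂ : Matrix (Fin n ⊕ Fin n) (Fin n ⊕ Fin n) ℝ :=
    fromBlocks (a • 1) C Cᵀ (b • 1) with hM₂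
  have hsmul : ∀ c : ℝ, (c • (1 : Matrix (Fin n) (Fin n) ℝ)).IsHermitian := fun c => by
    show _ᴴ = _
    rw [conjTranspose_smul, conjTranspose_one, star_trivial]
  have h₁ : M₁.IsHermitian := Matrix.IsHermitian.fromBlocks (hsmul a) rfl (hsmul b)
  have h₂ : M₂.IsHermitian := Matrix.IsHermitian.fromBlocks (hsmul a) rfl (hsmul b)
  have hspec : spectrum ℝ M₁ = spectrum ℝ M₂ := by
    ext μ
    rw [spectrum.mem_iff, spectrum.mem_iff, not_iff_not,
      Matrix.isUnit_iff_isUnit_det, Matrix.isUnit_iff_isUnit_det,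
      isUnit_iff_ne_zero, isUnit_iff_ne_zero]
    have halg : algebraMap ℝ (Matrix (Fin n ⊕ Fin n) (Fin n ⊕ Fin n) ℝ) μ
        = fromBlocks (μ • 1) 0 0 (μ • 1) := by
      rw [Algebra.algebraMap_eq_smul_one, ← fromBlocks_one, fromBlocks_smul]
      simp
    have e1 : algebraMap ℝ (Matrix (Fin n ⊕ Fin n) (Fin n ⊕ Fin n) ℝ) μ - M₁
        = fromBlocks ((μ - a) • 1) (-C)ᵀ (-C) ((μ - b) • 1) := by
      rw [halg, hM₁, sub_eq_add_neg, fromBlocks_neg, fromBlocks_add]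
      simp [sub_smul, sub_eq_add_neg, add_smul, neg_smul]
    have e2 : algebraMap ℝ (Matrix (Fin n ⊕ Fin n) (Fin n ⊕ Fin n) ℝ) μ - M₂
        = fromBlocks ((μ - a) • 1) (-C) (-C)ᵀ ((μ - b) • 1) := by
      rw [halg, hM₂, sub_eq_add_neg, fromBlocks_neg, fromBlocks_add]
      simp [sub_smul, sub_eq_add_neg, add_smul, neg_smul]
    rw [e1, e2, det_blocks_swap]
  obtain ⟨μ₁, hμ₁, e₁⟩ := exists_mem_spectrum_abs_eq_norm h₁
  obtain ⟨μ₂, hμ₂, e₂⟩ := exists_mem_spectrum_abs_eq_norm h₂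
  apply le_antisymm
  · rw [← e₁]
    have hmem : μ₁ ∈ spectrum ℝ M₂ := hspec ▸ hμ₁
    simpa [Real.norm_eq_abs] using spectrum.norm_le_norm_of_mem hmem
  · rw [← e₂]
    have hmem : μ₂ ∈ spectrum ℝ M₁ := hspec.symm ▸ hμ₂
    simpa [Real.norm_eq_abs] using spectrum.norm_le_norm_of_mem hmem
end

section
/- For every n ≥ 2, there is no linear map Ψ : M_{2n}(ℝ) → M_{2n}(ℝ) that maps positive semidefinite matrices to positive semidefinite matrices and satisfies Ψ([[a·I_n, C],[Cᵗ, b·I_n]]) = [[a·I_n, Cᵗ],[C, b·I_n]] for all a, b ∈ ℝ and C ∈ M_n(ℝ). (That is, the positive unital isometry Υ_n admits no positivity preserving extension to M_{2n}(ℝ).) -/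
open Matrix

namespace Stmt8Aux

variable {m : Type*} [Fintype m] [DecidableEq m]

/-- quadratic/bilinear form of a matrix -/
noncomputable def bil (M : Matrix m m ℝ) (v w : m → ℝ) : ℝ := v ⬝ᵥ (M *ᵥ w)

lemma psd_nonneg {M : Matrix m m ℝ} (hM : M.PosSemidef) (v : m → ℝ) :
    0 ≤ bil M v v := by
  have := hM.dotProduct_mulVec_nonneg v
  simpa [bil] using this

lemma bil_symm {M : Matrix m m ℝ} (hM : M.IsHermitian) (v w : m → ℝ) :
    bil M v w = bil M w v := by
  have hMt : Mᵀ = M := by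
    have := hM
    rw [Matrix.IsHermitian] at this
    simpa using this
  rw [bil, bil, Matrix.dotProduct_mulVec, ← Matrix.mulVec_transpose, hMt,
    dotProduct_comm]

lemma nonneg_linear {c d : ℝ} (h : ∀ t : ℝ, 0 ≤ c + t * d) : d = 0 := by
  by_contra hd
  have := h (-(c + 1) / d)
  rw [div_mul_cancel₀ _ hd] at this
  linarith

lemma bil_sub (M N : Matrix m m ℝ) (v w : m → ℝ) :
    bil (M - N) v w = bil M v w - bil N v w := by
  simp [bil, Matrix.sub_mulVec, dotProduct_sub]

lemma bil_add (M N : Matrix m m ℝ) (v w : m → ℝ) :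
    bil (M + N) v w = bil M v w + bil N v w := by
  simp [bil, Matrix.add_mulVec, dotProduct_add]

lemma psd_cancel {M : Matrix m m ℝ} (hM : M.PosSemidef) {w : m → ℝ}
    (hw : bil M w w = 0) (v : m → ℝ) : bil M v w = 0 := by
  have key : ∀ t : ℝ, 0 ≤ bil M v v + t * (2 * bil M v w) := by
    intro t
    have h0 := psd_nonneg hM (v + t • w)
    have hsymm := bil_symm hM.1 w v
    have hexp : bil M (v + t • w) (v + t • w)
        = bil M v v + t * (2 * bil M v w) := by
      simp only [bil, Matrix.mulVec_add, Matrix.mulVec_smul, dotProduct_add,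
        add_dotProduct, dotProduct_smul, smul_dotProduct, smul_eq_mul]
      have h1 : w ⬝ᵥ M *ᵥ v = v ⬝ᵥ M *ᵥ w := by
        simpa [bil] using hsymm
      have h2 : w ⬝ᵥ M *ᵥ w = 0 := by simpa [bil] using hw
      rw [h1, h2]; ring
    rw [hexp] at h0
    exact h0
  have := nonneg_linear key
  linarith

lemma vecMulVec_mulVec (a b v : m → ℝ) :
    vecMulVec a b *ᵥ v = (b ⬝ᵥ v) • a := by
  funext i
  simp [vecMulVec_apply, Matrix.mulVec, dotProduct, Finset.mul_sum, mul_assoc,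
    mul_comm, mul_left_comm]

lemma vecMulVec_psd (v : m → ℝ) : (vecMulVec v v).PosSemidef := by
  refine Matrix.PosSemidef.of_dotProduct_mulVec_nonneg ?_ ?_
  · ext i j
    simp [Matrix.conjTranspose_apply, vecMulVec_apply, mul_comm]
  · intro x
    have : star x ⬝ᵥ (vecMulVec v v *ᵥ x) = (v ⬝ᵥ x) * (v ⬝ᵥ x) := by
      rw [vecMulVec_mulVec]
      simp [dotProduct_smul, dotProduct_comm, star_trivial, mul_comm]
    rw [this]
    exact mul_self_nonneg _

lemma vecMulVec_transpose (a b : m → ℝ) :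
    (vecMulVec a b)ᵀ = vecMulVec b a := by
  ext i j
  simp [vecMulVec_apply, mul_comm]

lemma one_sub_vecMulVec_psd (x : m → ℝ) (hx : x ⬝ᵥ x = 1) :
    ((1 : Matrix m m ℝ) - vecMulVec x x).PosSemidef := by
  refine Matrix.PosSemidef.of_dotProduct_mulVec_nonneg ?_ ?_
  · ext i j
    simp [Matrix.conjTranspose_apply, vecMulVec_apply, Matrix.one_apply, mul_comm,
      eq_comm]
  · intro p
    have hcs : (x ⬝ᵥ p) ^ 2 ≤ (x ⬝ᵥ x) * (p ⬝ᵥ p) := by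
      have := Finset.sum_mul_sq_le_sq_mul_sq Finset.univ x p
      have h1 : ∀ f : m → ℝ, (∑ i, f i ^ 2) = f ⬝ᵥ f := by
        intro f; simp [dotProduct, sq]
      calc (x ⬝ᵥ p) ^ 2 = (∑ i, x i * p i) ^ 2 := by rfl
        _ ≤ (∑ i, x i ^ 2) * (∑ i, p i ^ 2) := this
        _ = (x ⬝ᵥ x) * (p ⬝ᵥ p) := by rw [h1, h1]
    have : star p ⬝ᵥ (((1 : Matrix m m ℝ) - vecMulVec x x) *ᵥ p)
        = p ⬝ᵥ p - (x ⬝ᵥ p) ^ 2 := by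
      rw [Matrix.sub_mulVec, vecMulVec_mulVec]
      simp [dotProduct_sub, dotProduct_smul, star_trivial, sq,
        dotProduct_comm p x]
    rw [this]
    rw [hx, one_mul] at hcs
    linarith

lemma sum_mulVec' {ι : Type*} (s : Finset ι) (M : ι → Matrix m m ℝ) (w : m → ℝ) :
    (∑ j ∈ s, M j) *ᵥ w = ∑ j ∈ s, M j *ᵥ w := by
  funext i
  rw [Finset.sum_apply]
  simp only [Matrix.mulVec, dotProduct, Matrix.sum_apply, Finset.sum_mul]
  exact Finset.sum_comm

lemma dotProduct_sum' {ι : Type*} (s : Finset ι) (v : m → ℝ) (f : ι → (m → ℝ)) :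
    v ⬝ᵥ (∑ j ∈ s, f j) = ∑ j ∈ s, v ⬝ᵥ f j := by
  simp only [dotProduct, Finset.sum_apply, Finset.mul_sum]
  exact Finset.sum_comm

end Stmt8Aux

open Stmt8Aux

/-- For `n ≥ 2` there is no positivity preserving linear map `Ψ` on `M_{2n}(ℝ)`
extending the map `Υ_n` on the real operator system `S_n`. -/
theorem stmt8 (n : ℕ) (hn : 2 ≤ n) :
    ¬ ∃ Ψ : Matrix (Fin n ⊕ Fin n) (Fin n ⊕ Fin n) ℝ →ₗ[ℝ]
        Matrix (Fin n ⊕ Fin n) (Fin n ⊕ Fin n) ℝ,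
      (∀ M : Matrix (Fin n ⊕ Fin n) (Fin n ⊕ Fin n) ℝ, M.PosSemidef → (Ψ M).PosSemidef) ∧
      (∀ (a b : ℝ) (C : Matrix (Fin n) (Fin n) ℝ),
        Ψ (Matrix.fromBlocks (a • (1 : Matrix (Fin n) (Fin n) ℝ)) C
            Cᵀ (b • (1 : Matrix (Fin n) (Fin n) ℝ))) =
          Matrix.fromBlocks (a • (1 : Matrix (Fin n) (Fin n) ℝ)) Cᵀ
            C (b • (1 : Matrix (Fin n) (Fin n) ℝ))) := by
  rintro ⟨Ψ, hpos, hext⟩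
  -- PSD of block-diagonal matrices
  have blockPSD : ∀ (A D : Matrix (Fin n) (Fin n) ℝ), A.PosSemidef → D.PosSemidef →
      (fromBlocks A 0 0 D).PosSemidef := by
    intro A D hA hD
    refine Matrix.PosSemidef.of_dotProduct_mulVec_nonneg ?_ ?_
    · rw [Matrix.IsHermitian, fromBlocks_conjTranspose]
      rw [hA.1, hD.1]
      simp
    · intro v
      have hv : v = Sum.elim (v ∘ Sum.inl) (v ∘ Sum.inr) := by
        funext i; cases i <;> rfl
      rw [hv, fromBlocks_mulVec]
      simp only [Matrix.zero_mulVec, add_zero, zero_add]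
      rw [Function.star_sumElim, sumElim_dotProduct_sumElim]
      exact add_nonneg (hA.dotProduct_mulVec_nonneg _) (hD.dotProduct_mulVec_nonneg _)
  -- known values of Ψ
  have hKval : ∀ x y : Fin n → ℝ,
      Ψ (fromBlocks 0 (vecMulVec x y) (vecMulVec y x) 0)
        = fromBlocks 0 (vecMulVec y x) (vecMulVec x y) 0 := by
    intro x y
    have := hext 0 0 (vecMulVec x y)
    simpa [vecMulVec_transpose] using this
  have hI1 : Ψ (fromBlocks 1 0 0 0) = fromBlocks 1 0 0 0 := by
    have := hext 1 0 (0 : Matrix (Fin n) (Fin n) ℝ)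
    simpa using this
  have hI2 : Ψ (fromBlocks 0 0 0 1) = fromBlocks 0 0 0 1 := by
    have := hext 0 1 (0 : Matrix (Fin n) (Fin n) ℝ)
    simpa using this
  -- the key estimate
  have key : ∀ x y : Fin n → ℝ, x ⬝ᵥ x = 1 → y ⬝ᵥ y = 1 →
      1 ≤ bil (Ψ (fromBlocks 0 0 0 (vecMulVec y y))) (Sum.elim 0 x) (Sum.elim 0 x) := by
    intro x y hx hy
    set A := Ψ (fromBlocks (vecMulVec x x) 0 0 0) with hAdef
    set D := Ψ (fromBlocks 0 0 0 (vecMulVec y y)) with hDdef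
    set K : Matrix (Fin n ⊕ Fin n) (Fin n ⊕ Fin n) ℝ :=
      fromBlocks 0 (vecMulVec y x) (vecMulVec x y) 0 with hKdef
    set w1 : Fin n ⊕ Fin n → ℝ := Sum.elim y 0 with hw1
    set w2 : Fin n ⊕ Fin n → ℝ := Sum.elim 0 x with hw2
    have hA : A.PosSemidef := hpos _ (blockPSD _ _ (vecMulVec_psd x) Matrix.PosSemidef.zero)
    have hD : D.PosSemidef := hpos _ (blockPSD _ _ Matrix.PosSemidef.zero (vecMulVec_psd y))
    -- squeeze bounds
    have hA' : (fromBlocks 1 0 0 0 - A).PosSemidef := by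
      have hdiff : (fromBlocks (1:Matrix (Fin n) (Fin n) ℝ) 0 0 0
            : Matrix (Fin n ⊕ Fin n) (Fin n ⊕ Fin n) ℝ)
          - fromBlocks (vecMulVec x x) 0 0 0
          = fromBlocks (1 - vecMulVec x x) 0 0 0 := by
        ext i j; rcases i with i | i <;> rcases j with j | j <;> simp [fromBlocks]
      have := hpos _ ((hdiff ▸ blockPSD (1 - vecMulVec x x) 0
        (one_sub_vecMulVec_psd x hx) Matrix.PosSemidef.zero))
      rw [map_sub, hI1] at this
      exact this
    have hD' : (fromBlocks 0 0 0 1 - D).PosSemidef := by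
      have hdiff : (fromBlocks (0:Matrix (Fin n) (Fin n) ℝ) 0 0 1
            : Matrix (Fin n ⊕ Fin n) (Fin n ⊕ Fin n) ℝ)
          - fromBlocks 0 0 0 (vecMulVec y y)
          = fromBlocks 0 0 0 (1 - vecMulVec y y) := by
        ext i j; rcases i with i | i <;> rcases j with j | j <;> simp [fromBlocks]
      have := hpos _ ((hdiff ▸ blockPSD 0 (1 - vecMulVec y y)
        Matrix.PosSemidef.zero (one_sub_vecMulVec_psd y hy)))
      rw [map_sub, hI2] at this
      exact this
    -- M = A + K + D is PSD
    have hsplit : (fromBlocks (vecMulVec x x) (vecMulVec x y) (vecMulVec y x) (vecMulVec y y)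
        : Matrix (Fin n ⊕ Fin n) (Fin n ⊕ Fin n) ℝ)
        = fromBlocks (vecMulVec x x) 0 0 0
          + fromBlocks 0 (vecMulVec x y) (vecMulVec y x) 0
          + fromBlocks 0 0 0 (vecMulVec y y) := by
      ext i j; rcases i with i | i <;> rcases j with j | j <;> simp [fromBlocks]
    have houter : (fromBlocks (vecMulVec x x) (vecMulVec x y) (vecMulVec y x) (vecMulVec y y)
        : Matrix (Fin n ⊕ Fin n) (Fin n ⊕ Fin n) ℝ)
        = vecMulVec (Sum.elim x y) (Sum.elim x y) := by
      ext i j; rcases i with i | i <;> rcases j with j | j <;> simp [fromBlocks, vecMulVec_apply]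
    have hMpsd : (A + K + D).PosSemidef := by
      have h1 : Ψ (fromBlocks (vecMulVec x x) (vecMulVec x y) (vecMulVec y x) (vecMulVec y y))
          = A + K + D := by
        rw [hsplit, map_add, map_add, hKval x y, hAdef, hDdef, hKdef]
      rw [← h1]
      exact hpos _ (houter ▸ vecMulVec_psd (Sum.elim x y))
    -- scalar computations with K
    have hKw1 : K *ᵥ w1 = Sum.elim (0 : Fin n → ℝ) x := by
      rw [hKdef, hw1, fromBlocks_mulVec]
      simp [Stmt8Aux.vecMulVec_mulVec, hy]
    have hKw2 : K *ᵥ w2 = Sum.elim y (0 : Fin n → ℝ) := by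
      rw [hKdef, hw2, fromBlocks_mulVec]
      simp [Stmt8Aux.vecMulVec_mulVec, hx]
    have cK11 : bil K w1 w1 = 0 := by
      rw [bil, hKw1, hw1, sumElim_dotProduct_sumElim]; simp
    have cK22 : bil K w2 w2 = 0 := by
      rw [bil, hKw2, hw2, sumElim_dotProduct_sumElim]; simp
    have cK12 : bil K w1 w2 = 1 := by
      rw [bil, hKw2, hw1, sumElim_dotProduct_sumElim]; simp [hy]
    have cK21 : bil K w2 w1 = 1 := by
      rw [bil, hKw1, hw2, sumElim_dotProduct_sumElim]; simp [hx]
    -- quadratic forms of the reference blocks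
    have href1 : bil (fromBlocks 1 0 0 0 : Matrix (Fin n ⊕ Fin n) (Fin n ⊕ Fin n) ℝ) w1 w1
        = 1 := by
      rw [bil, hw1, fromBlocks_mulVec]
      simp [sumElim_dotProduct_sumElim, hy]
    have href1' : bil (fromBlocks 1 0 0 0 : Matrix (Fin n ⊕ Fin n) (Fin n ⊕ Fin n) ℝ) w2 w2
        = 0 := by
      rw [bil, hw2, fromBlocks_mulVec]
      simp [sumElim_dotProduct_sumElim]
    have href2 : bil (fromBlocks 0 0 0 1 : Matrix (Fin n ⊕ Fin n) (Fin n ⊕ Fin n) ℝ) w1 w1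
        = 0 := by
      rw [bil, hw1, fromBlocks_mulVec]
      simp [sumElim_dotProduct_sumElim]
    -- squeeze: bil A w2 w2 = 0, bil D w1 w1 = 0, bil A w1 w1 ≤ 1
    have hA22 : bil A w2 w2 = 0 := by
      have h1 := psd_nonneg hA w2
      have h2 := psd_nonneg hA' w2
      rw [bil_sub, href1'] at h2
      linarith
    have hD11 : bil D w1 w1 = 0 := by
      have h1 := psd_nonneg hD w1
      have h2 := psd_nonneg hD' w1
      rw [bil_sub, href2] at h2
      linarith
    have hA11 : bil A w1 w1 ≤ 1 := by
      have h2 := psd_nonneg hA' w1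
      rw [bil_sub, href1] at h2
      linarith
    have hA12 : bil A w1 w2 = 0 := psd_cancel hA hA22 w1
    have hA21 : bil A w2 w1 = 0 := by rw [bil_symm hA.1]; exact hA12
    have hD21 : bil D w2 w1 = 0 := psd_cancel hD hD11 w2
    have hD12 : bil D w1 w2 = 0 := by rw [bil_symm hD.1]; exact hD21
    -- positivity of M at w1 - w2
    have hfinal := psd_nonneg hMpsd (w1 - w2)
    have hexp : bil (A + K + D) (w1 - w2) (w1 - w2)
        = bil A w1 w1 - bil A w1 w2 - bil A w2 w1 + bil A w2 w2
          + (bil K w1 w1 - bil K w1 w2 - bil K w2 w1 + bil K w2 w2)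
          + (bil D w1 w1 - bil D w1 w2 - bil D w2 w1 + bil D w2 w2) := by
      simp only [bil, Matrix.add_mulVec, Matrix.mulVec_sub, dotProduct_add,
        add_dotProduct, dotProduct_sub, sub_dotProduct]
      ring
    rw [hexp, hA12, hA21, hA22, cK11, cK12, cK21, cK22, hD11, hD12, hD21] at hfinal
    have : bil D w2 w2 ≥ 2 - bil A w1 w1 := by linarith
    rw [hDdef] at this ⊢
    linarith
  -- sum over an orthonormal basis gives the contradiction
  have hn0 : 0 < n := by omega
  set i0 : Fin n := ⟨0, hn0⟩ with hi0
  set e : Fin n → (Fin n → ℝ) := fun i => Pi.single i 1 with he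
  have hunit : ∀ i, e i ⬝ᵥ e i = 1 := by
    intro i
    simp [he, dotProduct, Pi.single_apply]
  have hidsum : (∑ j, vecMulVec (e j) (e j)) = (1 : Matrix (Fin n) (Fin n) ℝ) := by
    ext i k
    rw [Matrix.sum_apply]
    simp only [vecMulVec_apply, he, Pi.single_apply, Matrix.one_apply]
    rcases eq_or_ne i k with h | h
    · subst h
      rw [Finset.sum_eq_single i]
      · simp
      · intro b _ hb; simp [hb.symm]
      · simp
    · rw [Finset.sum_eq_zero]
      · simp [h]
      · intro b _
        rcases eq_or_ne b i with rfl | hb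
        · simp [Ne.symm h]
        · simp [hb.symm]
  have hblocksum : (∑ j, (fromBlocks 0 0 0 (vecMulVec (e j) (e j))
      : Matrix (Fin n ⊕ Fin n) (Fin n ⊕ Fin n) ℝ)) = fromBlocks 0 0 0 1 := by
    ext i k
    rw [Matrix.sum_apply]
    rcases i with i | i <;> rcases k with k | k <;>
      simp only [fromBlocks, Matrix.of_apply, Sum.elim_inl, Sum.elim_inr,
        Matrix.zero_apply, Finset.sum_const_zero]
    rw [← Matrix.sum_apply]
    rw [hidsum]
  set w : Fin n ⊕ Fin n → ℝ := Sum.elim 0 (e i0) with hw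
  have hsum : (∑ j, bil (Ψ (fromBlocks 0 0 0 (vecMulVec (e j) (e j)))) w w) = 1 := by
    have h1 : (∑ j, bil (Ψ (fromBlocks 0 0 0 (vecMulVec (e j) (e j)))) w w)
        = bil (Ψ (∑ j, (fromBlocks 0 0 0 (vecMulVec (e j) (e j))
          : Matrix (Fin n ⊕ Fin n) (Fin n ⊕ Fin n) ℝ))) w w := by
      rw [map_sum]
      simp only [bil]
      rw [sum_mulVec', dotProduct_sum']
    rw [h1, hblocksum, hI2, bil, hw, fromBlocks_mulVec]
    simp [sumElim_dotProduct_sumElim, hunit i0]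
  have hge : ∀ j, (1:ℝ) ≤ bil (Ψ (fromBlocks 0 0 0 (vecMulVec (e j) (e j)))) w w := by
    intro j
    exact key (e i0) (e j) (hunit i0) (hunit j)
  have : (n : ℝ) ≤ ∑ j : Fin n, bil (Ψ (fromBlocks 0 0 0 (vecMulVec (e j) (e j)))) w w := by
    calc (n : ℝ) = ∑ _j : Fin n, (1:ℝ) := by simp
    _ ≤ _ := Finset.sum_le_sum fun j _ => hge j
  rw [hsum] at this
  have : (n : ℝ) ≤ 1 := this
  have : (2 : ℝ) ≤ 1 := le_trans (by exact_mod_cast hn) this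
  linarith
end

section
/- Let n ≥ 1, let a, b ∈ ℂ and let C ∈ M_n(ℂ). If the complex block matrix [[a·I_n, C],[Cᵗ, b·I_n]] is positive semidefinite, then the block matrix [[a·I_n, Cᵗ],[C, b·I_n]] is positive semidefinite. (That is, the complexification Υ'_n of Υ_n is positive.) -/
open Matrix
open scoped ComplexOrder

/-- A matrix is PSD if all its positive perturbations by scalar matrices are PSD. -/
lemma psd_of_forall_eps {m : Type*} [Fintype m] [DecidableEq m] (T : Matrix m m ℂ)
    (H : ∀ ε : ℝ, 0 < ε → (T + (ε : ℂ) • (1 : Matrix m m ℂ)).PosSemidef) : T.PosSemidef := by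
  rw [Matrix.posSemidef_iff_dotProduct_mulVec]
  constructor
  · have h1 := (H 1 one_pos).1
    have : (T + (1:ℂ) • 1)ᴴ = T + (1:ℂ) • 1 := h1
    simpa [Matrix.conjTranspose_add, Matrix.IsHermitian, add_left_inj] using this
  · intro x
    set z := star x ⬝ᵥ T *ᵥ x with hz
    set c := star x ⬝ᵥ x with hc
    have hcn : 0 ≤ c := dotProduct_star_self_nonneg x
    have key : ∀ ε : ℝ, 0 < ε → 0 ≤ z + (ε : ℂ) * c := by
      intro ε hε
      have := (H ε hε).dotProduct_mulVec_nonneg x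
      simpa [Matrix.add_mulVec, Matrix.smul_mulVec, dotProduct_add,
        dotProduct_smul, smul_eq_mul, hz, hc] using this
    rw [Complex.nonneg_iff]
    rw [Complex.nonneg_iff] at hcn
    constructor
    · by_contra hre
      push_neg at hre
      have hε : 0 < (-z.re) / (c.re + 1) := by
        apply div_pos (by linarith) (by linarith [hcn.1])
      have h2 := (Complex.nonneg_iff.mp (key _ hε)).1
      simp only [Complex.add_re, Complex.mul_re, Complex.ofReal_re, Complex.ofReal_im,
        zero_mul, sub_zero] at h2
      have hpos : 0 < c.re + 1 := by linarith [hcn.1]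
      have h3 : 0 ≤ (z.re + -z.re / (c.re + 1) * c.re) * (c.re + 1) :=
        mul_nonneg h2 hpos.le
      have h4 : (z.re + -z.re / (c.re + 1) * c.re) * (c.re + 1) = z.re := by
        field_simp
        ring
      rw [h4] at h3
      linarith
    · have h2 := (Complex.nonneg_iff.mp (key 1 one_pos)).2
      have h3 := (Complex.nonneg_iff.mp (key 2 two_pos)).2
      simp only [Complex.add_im, Complex.mul_im, Complex.ofReal_re, Complex.ofReal_im,
        zero_mul, add_zero] at h2 h3
      linarith [hcn.2]

/-- The complexification `Υ'_n` of `Υ_n` is positive: for `a, b : ℂ` and `C : M_n(ℂ)`,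
if `[[a•I, C], [Cᵗ, b•I]]` is positive semidefinite then so is `[[a•I, Cᵗ], [C, b•I]]`. -/
theorem stmt9 (n : ℕ) (hn : 1 ≤ n) (a b : ℂ) (C : Matrix (Fin n) (Fin n) ℂ)
    (h : (Matrix.fromBlocks (a • (1 : Matrix (Fin n) (Fin n) ℂ)) C
      Cᵀ (b • (1 : Matrix (Fin n) (Fin n) ℂ))).PosSemidef) :
    (Matrix.fromBlocks (a • (1 : Matrix (Fin n) (Fin n) ℂ)) Cᵀ
      C (b • (1 : Matrix (Fin n) (Fin n) ℂ))).PosSemidef := by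
  have i0 : Fin n := ⟨0, hn⟩
  have ha : 0 ≤ a := by
    have := h.dotProduct_mulVec_nonneg (Pi.single (Sum.inl i0) 1)
    simpa [Matrix.mulVec, dotProduct, Pi.single_apply, Matrix.fromBlocks,
      Matrix.one_apply, apply_ite] using this
  have hb : 0 ≤ b := by
    have := h.dotProduct_mulVec_nonneg (Pi.single (Sum.inr i0) 1)
    simpa [Matrix.mulVec, dotProduct, Pi.single_apply, Matrix.fromBlocks,
      Matrix.one_apply, apply_ite] using this
  obtain ⟨har, hai⟩ := Complex.nonneg_iff.mp ha
  obtain ⟨hbr, hbi⟩ := Complex.nonneg_iff.mp hb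
  apply psd_of_forall_eps
  intro eps heps
  set α : ℝ := a.re + eps with hα
  set β : ℝ := b.re + eps with hβ
  have hα0 : 0 < α := by linarith
  have hβ0 : 0 < β := by linarith
  set s : ℝ := Real.sqrt β / Real.sqrt α with hs
  set t : ℝ := Real.sqrt α / Real.sqrt β with ht
  have hsa : 0 < Real.sqrt α := Real.sqrt_pos.mpr hα0
  have hsb : 0 < Real.sqrt β := Real.sqrt_pos.mpr hβ0
  have hst : s * t = 1 := by
    rw [hs, ht]
    field_simp
  have hs2 : s * s * α = β := by
    rw [hs]
    rw [div_mul_div_comm, ← Real.sqrt_mul hβ0.le, Real.sqrt_mul_self hβ0.le,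
      ← Real.sqrt_mul hα0.le, Real.sqrt_mul_self hα0.le]
    field_simp
  have ht2 : t * t * β = α := by
    rw [ht]
    rw [div_mul_div_comm, ← Real.sqrt_mul hα0.le, Real.sqrt_mul_self hα0.le,
      ← Real.sqrt_mul hβ0.le, Real.sqrt_mul_self hβ0.le]
    field_simp
  have haε : a + (eps : ℂ) = (α : ℂ) := by
    apply Complex.ext <;> simp [hα, ← hai]
  have hbε : b + (eps : ℂ) = (β : ℂ) := by
    apply Complex.ext <;> simp [hβ, ← hbi]
  have hM' : (Matrix.fromBlocks ((α : ℂ) • (1 : Matrix (Fin n) (Fin n) ℂ)) C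
      Cᵀ ((β : ℂ) • (1 : Matrix (Fin n) (Fin n) ℂ))).PosSemidef := by
    have := h.add (Matrix.PosSemidef.diagonal
      (d := fun _ : Fin n ⊕ Fin n => (eps : ℂ))
      (fun _ => by positivity))
    convert this using 1
    rw [show (Matrix.diagonal fun _ : Fin n ⊕ Fin n => (eps : ℂ)) =
        (eps : ℂ) • (1 : Matrix (Fin n ⊕ Fin n) (Fin n ⊕ Fin n) ℂ) by
      simp [Matrix.smul_one_eq_diagonal],
      ← Matrix.fromBlocks_one, Matrix.fromBlocks_smul, Matrix.fromBlocks_add]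
    rw [Matrix.fromBlocks_inj]
    refine ⟨?_, by simp, by simp, ?_⟩
    · rw [← add_smul, haε]
    · rw [← add_smul, hbε]
  have hE := hM'.conjTranspose_mul_mul_same
    (Matrix.fromBlocks (0 : Matrix (Fin n) (Fin n) ℂ) ((s : ℂ) • (1 : Matrix (Fin n) (Fin n) ℂ))
      ((t : ℂ) • (1 : Matrix (Fin n) (Fin n) ℂ)) (0 : Matrix (Fin n) (Fin n) ℂ))
  convert hE using 1
  rw [show ((eps : ℂ) • (1 : Matrix (Fin n ⊕ Fin n) (Fin n ⊕ Fin n) ℂ)) =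
      Matrix.fromBlocks ((eps:ℂ) • 1) 0 0 ((eps:ℂ) • 1) by
    rw [← Matrix.fromBlocks_one, Matrix.fromBlocks_smul]; simp]
  rw [Matrix.fromBlocks_add, Matrix.fromBlocks_conjTranspose,
    Matrix.fromBlocks_multiply, Matrix.fromBlocks_multiply]
  rw [Matrix.fromBlocks_inj]
  refine ⟨?_, ?_, ?_, ?_⟩
  · simp only [Matrix.smul_mul, Matrix.mul_smul, smul_smul, Matrix.mul_zero,
      Matrix.zero_mul, Matrix.mul_one, Matrix.one_mul, add_zero, zero_add,
      smul_zero, smul_smul, Matrix.conjTranspose_zero, Matrix.conjTranspose_smul,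
      Matrix.conjTranspose_one, Complex.star_def, Complex.conj_ofReal]
    rw [← add_smul, haε, show ((t : ℂ) * ((β : ℂ) * (t : ℂ))) = ((t * t * β : ℝ) : ℂ) by
      push_cast; ring, ht2]
  · simp only [Matrix.smul_mul, Matrix.mul_smul, smul_smul, Matrix.mul_zero,
      Matrix.zero_mul, Matrix.mul_one, Matrix.one_mul, add_zero, zero_add,
      smul_zero, smul_smul, Matrix.conjTranspose_zero, Matrix.conjTranspose_smul,
      Matrix.conjTranspose_one, Complex.star_def, Complex.conj_ofReal]
    rw [show ((s : ℂ) * (t : ℂ)) = ((s * t : ℝ) : ℂ) by push_cast; ring, hst]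
    simp
  · simp only [Matrix.smul_mul, Matrix.mul_smul, smul_smul, Matrix.mul_zero,
      Matrix.zero_mul, Matrix.mul_one, Matrix.one_mul, add_zero, zero_add,
      smul_zero, smul_smul, Matrix.conjTranspose_zero, Matrix.conjTranspose_smul,
      Matrix.conjTranspose_one, Complex.star_def, Complex.conj_ofReal]
    rw [show ((t : ℂ) * (s : ℂ)) = ((s * t : ℝ) : ℂ) by push_cast; ring, hst]
    simp
  · simp only [Matrix.smul_mul, Matrix.mul_smul, smul_smul, Matrix.mul_zero,
      Matrix.zero_mul, Matrix.mul_one, Matrix.one_mul, add_zero, zero_add,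
      smul_zero, smul_smul, Matrix.conjTranspose_zero, Matrix.conjTranspose_smul,
      Matrix.conjTranspose_one, Complex.star_def, Complex.conj_ofReal]
    rw [← add_smul, hbε, show ((s : ℂ) * ((α : ℂ) * (s : ℂ))) = ((s * s * α : ℝ) : ℂ) by
      push_cast; ring, hs2]
end

section
/- Let n ≥ 1, let A ∈ M_n(ℂ) and let b, c, d ∈ ℂ. If the block matrix [[A, b·I_n],[c·I_n, d·I_n]] is positive semidefinite, then the block matrix [[Aᵗ, b·I_n],[c·I_n, d·I_n]] is positive semidefinite. (That is, the map Γ_n on the operator system T_n is positive.) -/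
open Matrix
open scoped ComplexOrder

private lemma quad_blocks {n : ℕ} (A : Matrix (Fin n) (Fin n) ℂ) (b c d : ℂ)
    (x y : Fin n → ℂ) :
    star (Sum.elim x y) ⬝ᵥ
      (Matrix.fromBlocks A (b • (1 : Matrix (Fin n) (Fin n) ℂ))
        (c • (1 : Matrix (Fin n) (Fin n) ℂ)) (d • (1 : Matrix (Fin n) (Fin n) ℂ))).mulVec
        (Sum.elim x y)
    = star x ⬝ᵥ A.mulVec x + b * (star x ⬝ᵥ y) + c * (star y ⬝ᵥ x) + d * (star y ⬝ᵥ y) := by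
  have hst : star (Sum.elim x y) = Sum.elim (star x) (star y) := by
    funext i; cases i <;> rfl
  rw [hst, Matrix.fromBlocks_mulVec]
  simp only [sumElim_dotProduct_sumElim, dotProduct_add, smul_mulVec,
    one_mulVec, dotProduct_smul, smul_eq_mul, Sum.elim_comp_inl, Sum.elim_comp_inr]
  ring

private lemma transpose_quad {n : ℕ} (A : Matrix (Fin n) (Fin n) ℂ) (x : Fin n → ℂ) :
    star x ⬝ᵥ Aᵀ.mulVec x = star (star x) ⬝ᵥ A.mulVec (star x) := by
  rw [star_star, Matrix.dotProduct_mulVec, dotProduct_comm, ← Matrix.mulVec_transpose,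
    Matrix.transpose_transpose]

/-- The map `Γ_n` on the operator system `T_n` is positive: if
`[[A, b•I], [c•I, d•I]]` is positive semidefinite then so is `[[Aᵗ, b•I], [c•I, d•I]]`. -/
theorem stmt11 (n : ℕ) (hn : 1 ≤ n) (A : Matrix (Fin n) (Fin n) ℂ) (b c d : ℂ)
    (h : (Matrix.fromBlocks A (b • (1 : Matrix (Fin n) (Fin n) ℂ))
      (c • (1 : Matrix (Fin n) (Fin n) ℂ)) (d • (1 : Matrix (Fin n) (Fin n) ℂ))).PosSemidef) :
    (Matrix.fromBlocks Aᵀ (b • (1 : Matrix (Fin n) (Fin n) ℂ))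
      (c • (1 : Matrix (Fin n) (Fin n) ℂ)) (d • (1 : Matrix (Fin n) (Fin n) ℂ))).PosSemidef := by
  obtain ⟨hH, hq⟩ := Matrix.posSemidef_iff_dotProduct_mulVec.mp h
  rw [Matrix.isHermitian_fromBlocks_iff] at hH
  obtain ⟨hA, hbc, hcb, hd⟩ := hH
  have i0 : Fin n := ⟨0, hn⟩
  -- d is nonneg
  have hd0 : 0 ≤ d := by
    have h0 := hq (Sum.elim 0 (Pi.single i0 1))
    rw [quad_blocks] at h0
    simpa [dotProduct, Pi.single_apply, apply_ite] using h0
  refine Matrix.posSemidef_iff_dotProduct_mulVec.mpr ⟨Matrix.IsHermitian.fromBlocks hA.transpose hbc hd, fun v => ?_⟩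
  have hv : v = Sum.elim (v ∘ Sum.inl) (v ∘ Sum.inr) := (Sum.elim_comp_inl_inr v).symm
  set x := v ∘ Sum.inl
  set y := v ∘ Sum.inr
  rw [hv, quad_blocks]
  by_cases hx : x = 0
  · simp only [hx, star_zero, Matrix.mulVec_zero, zero_dotProduct,
      dotProduct_zero, mul_zero, zero_add, add_zero]
    exact mul_nonneg hd0 (dotProduct_star_self_nonneg y)
  · set t := star x ⬝ᵥ x with ht_def
    set s := star x ⬝ᵥ y with hs_def
    have ht : t ≠ 0 := fun h0 => hx (dotProduct_star_self_eq_zero.mp h0)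
    have hts : star t = t := by
      simp [ht_def, dotProduct, Finset.sum_comm, mul_comm]
    have hxt : x ⬝ᵥ star x = t := dotProduct_comm _ _
    have hys : star y ⬝ᵥ x = star s := by
      simp [hs_def, dotProduct, mul_comm]
    set w : Fin n → ℂ := (s / t) • star x with hw_def
    have hq1 := hq (Sum.elim (star x) w)
    rw [quad_blocks] at hq1
    set z : Fin n → ℂ := y - (s / t) • x with hz_def
    have hz0 : 0 ≤ d * (star z ⬝ᵥ z) :=
      mul_nonneg hd0 (dotProduct_star_self_nonneg z)
    have key : star x ⬝ᵥ Aᵀ.mulVec x + b * (star x ⬝ᵥ y) + c * (star y ⬝ᵥ x)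
        + d * (star y ⬝ᵥ y)
        = (star (star x) ⬝ᵥ A.mulVec (star x) + b * (star (star x) ⬝ᵥ w)
          + c * (star w ⬝ᵥ star x) + d * (star w ⬝ᵥ w)) + d * (star z ⬝ᵥ z) := by
      rw [transpose_quad]
      simp only [hw_def, hz_def, star_smul, star_star, dotProduct_smul,
        smul_dotProduct, dotProduct_sub, sub_dotProduct,
        star_sub, smul_eq_mul, star_div₀, hxt, hys, hts, ← hs_def]
      field_simp
      ring
    rw [key]
    exact add_nonneg hq1 hz0
end

section
/- Let n ≥ 1, let A ∈ M_n(ℂ) and let b, c, d ∈ ℂ. Set M = [[A, b·I_n],[c·I_n, d·I_n]] and N = [[A, c·I_n],[b·I_n, d·I_n]]. Then the characteristic polynomials of MᴴM and NᴴN are equal; consequently M and N have the same singular values. -/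
open Matrix
open scoped ComplexOrder

open Polynomial in
private lemma detAux {n : ℕ} (P Q R' : Matrix (Fin n) (Fin n) ℂ[X]) (g : ℂ[X]) (hg : g ≠ 0) :
    (Matrix.fromBlocks P Q R' (g • (1 : Matrix (Fin n) (Fin n) ℂ[X]))).det
      = (g • P - Q * R').det := by
  have key : Matrix.fromBlocks P Q R' (g • (1 : Matrix (Fin n) (Fin n) ℂ[X])) *
      Matrix.fromBlocks (g • 1) 0 (-R') 1 =
      Matrix.fromBlocks (g • P - Q * R') Q 0 (g • 1) := by
    rw [Matrix.fromBlocks_multiply]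
    simp [Matrix.mul_smul, Matrix.smul_mul, sub_eq_add_neg]
  have hdet := congrArg Matrix.det key
  rw [Matrix.det_mul, Matrix.det_fromBlocks_zero₁₂, Matrix.det_fromBlocks_zero₂₁,
    Matrix.det_one, mul_one] at hdet
  have hg' : (g • (1 : Matrix (Fin n) (Fin n) ℂ[X])).det ≠ 0 := by
    rw [Matrix.det_smul, Matrix.det_one, mul_one]
    exact pow_ne_zero _ hg
  exact mul_right_cancel₀ hg' hdet

open Polynomial in
private lemma charmatrix_smul_one {n : ℕ} (e : ℂ) :
    charmatrix (e • (1 : Matrix (Fin n) (Fin n) ℂ)) = (X - C e) • 1 := by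
  ext i j
  by_cases h : i = j <;>
    simp [h, Matrix.one_apply, Matrix.smul_apply]

open Polynomial in
private lemma map_C_smul {n : ℕ} (x : ℂ) (B : Matrix (Fin n) (Fin n) ℂ) :
    (x • B).map C = C x • (B.map C) := by
  ext i j; simp

open Polynomial in
private lemma map_C_add {n : ℕ} (B1 B2 : Matrix (Fin n) (Fin n) ℂ) :
    (B1 + B2).map C = B1.map C + B2.map C := by
  ext i j; simp

open Polynomial in
private lemma map_C_mul' {n : ℕ} (B1 B2 : Matrix (Fin n) (Fin n) ℂ) :
    (B1 * B2).map C = B1.map C * B2.map C :=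
  Matrix.map_mul

open Polynomial in
private lemma map_C_one {n : ℕ} :
    (1 : Matrix (Fin n) (Fin n) ℂ).map C = 1 :=
  Matrix.map_one _ (map_zero _) (map_one _)

open Polynomial in
private lemma charmatrix_eq {n : ℕ} (B : Matrix (Fin n) (Fin n) ℂ) :
    charmatrix B = (X : ℂ[X]) • (1 : Matrix (Fin n) (Fin n) ℂ[X]) - B.map C := by
  ext i j
  by_cases h : i = j <;> simp [h, Matrix.one_apply]

/-- For `M = [[A, b•I], [c•I, d•I]]` and `N = [[A, c•I], [b•I, d•I]]`, the matrices
`MᴴM` and `NᴴN` have the same characteristic polynomial; consequently `M` and `N`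
have the same singular values. -/
theorem stmt12 (n : ℕ) (hn : 1 ≤ n) (A : Matrix (Fin n) (Fin n) ℂ) (b c d : ℂ) :
    ((Matrix.fromBlocks A (b • (1 : Matrix (Fin n) (Fin n) ℂ))
        (c • (1 : Matrix (Fin n) (Fin n) ℂ)) (d • (1 : Matrix (Fin n) (Fin n) ℂ)))ᴴ *
      Matrix.fromBlocks A (b • (1 : Matrix (Fin n) (Fin n) ℂ))
        (c • (1 : Matrix (Fin n) (Fin n) ℂ)) (d • (1 : Matrix (Fin n) (Fin n) ℂ))).charpoly =
    ((Matrix.fromBlocks A (c • (1 : Matrix (Fin n) (Fin n) ℂ))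
        (b • (1 : Matrix (Fin n) (Fin n) ℂ)) (d • (1 : Matrix (Fin n) (Fin n) ℂ)))ᴴ *
      Matrix.fromBlocks A (c • (1 : Matrix (Fin n) (Fin n) ℂ))
        (b • (1 : Matrix (Fin n) (Fin n) ℂ)) (d • (1 : Matrix (Fin n) (Fin n) ℂ))).charpoly := by
  have expand : ∀ x y : ℂ,
      (Matrix.fromBlocks A (x • (1 : Matrix (Fin n) (Fin n) ℂ)) (y • 1) (d • 1))ᴴ *
        Matrix.fromBlocks A (x • 1) (y • 1) (d • 1) =
      Matrix.fromBlocks (Aᴴ * A + (star y * y) • 1) (x • Aᴴ + (star y * d) • 1)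
        (star x • A + (star d * y) • 1) ((star x * x + star d * d) • 1) := by
    intro x y
    rw [Matrix.fromBlocks_conjTranspose, Matrix.fromBlocks_multiply]
    simp [Matrix.smul_mul, Matrix.mul_smul, smul_smul, Matrix.conjTranspose_smul,
      add_smul, mul_comm]
  open Polynomial in
  rw [Matrix.charpoly, Matrix.charpoly, expand b c, expand c b,
    charmatrix_fromBlocks, charmatrix_fromBlocks, charmatrix_smul_one, charmatrix_smul_one,
    detAux _ _ _ _ (Polynomial.X_sub_C_ne_zero _),
    detAux _ _ _ _ (Polynomial.X_sub_C_ne_zero _)]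
  congr 1
  rw [charmatrix_eq, charmatrix_eq]
  simp only [map_C_add, map_C_smul, map_C_mul', map_C_one,
    Matrix.neg_mul, Matrix.mul_neg, neg_neg, Matrix.add_mul, Matrix.mul_add,
    Matrix.smul_mul, Matrix.mul_smul, smul_smul, smul_sub, smul_add, sub_eq_add_neg,
    neg_add, Matrix.mul_one, Matrix.one_mul, Polynomial.C_add, Polynomial.C_mul]
  match_scalars <;> ring
end

section
/- Let n ≥ 1, let A ∈ M_n(ℂ) and let b, c, d ∈ ℂ. Then ‖[[Aᵗ, b·I_n],[c·I_n, d·I_n]]‖ = ‖[[A, b·I_n],[c·I_n, d·I_n]]‖, where ‖·‖ is the ℓ²→ℓ² operator norm on M_{2n}(ℂ). (That is, the map Γ_n is an isometry.) -/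
set_option maxHeartbeats 1600000

open Matrix
open scoped Matrix.Norms.L2Operator

namespace Stmt13Aux

variable {k : Type*} [Fintype k] [DecidableEq k]

theorem eval_cp (M : Matrix k k ℂ) (t : ℂ) :
    M.charpoly.eval t = det (t • (1 : Matrix k k ℂ) - M) := by
  rw [Matrix.charpoly, ← Polynomial.coe_evalRingHom, RingHom.map_det]
  congr 1
  ext i j
  by_cases h : i = j <;>
    simp [h, Matrix.charmatrix_apply, Matrix.one_apply, Matrix.smul_apply]

theorem spec_eq (M N : Matrix k k ℂ) (h : M.charpoly = N.charpoly) :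
    spectrum ℂ M = spectrum ℂ N := by
  have key : ∀ z : ℂ, (z • (1 : Matrix k k ℂ) - M).det = (z • 1 - N).det := fun z => by
    rw [← eval_cp, ← eval_cp, h]
  ext z
  simp only [spectrum.mem_iff, Algebra.algebraMap_eq_smul_one,
    Matrix.isUnit_iff_isUnit_det, key z]

noncomputable local instance : CStarAlgebra (Matrix k k ℂ) := Matrix.instCStarAlgebra

theorem norm_eq_of_cp (X Y : Matrix k k ℂ)
    (h : (Xᴴ * X).charpoly = (Yᴴ * Y).charpoly) : ‖X‖ = ‖Y‖ := by
  have hX : IsSelfAdjoint (Xᴴ * X) := IsSelfAdjoint.star_mul_self X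
  have hY : IsSelfAdjoint (Yᴴ * Y) := IsSelfAdjoint.star_mul_self Y
  have hs : spectrum ℂ (Xᴴ * X) = spectrum ℂ (Yᴴ * Y) := spec_eq _ _ h
  have hr : spectralRadius ℂ (Xᴴ * X) = spectralRadius ℂ (Yᴴ * Y) := by
    unfold spectralRadius; rw [hs]
  have hn : ‖Xᴴ * X‖₊ = ‖Yᴴ * Y‖₊ := by
    have := hX.spectralRadius_eq_nnnorm
    rw [hr, hY.spectralRadius_eq_nnnorm] at this
    exact_mod_cast this.symm
  have h2 : ‖X‖ * ‖X‖ = ‖Y‖ * ‖Y‖ := by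
    rw [← Matrix.l2_opNorm_conjTranspose_mul_self, ← Matrix.l2_opNorm_conjTranspose_mul_self]
    exact congrArg NNReal.toReal hn
  nlinarith [norm_nonneg X, norm_nonneg Y]

theorem det_mul_add_smul_one (X Y : Matrix k k ℂ) (μ : ℂ) :
    det (X * Y + μ • 1) = det (Y * X + μ • 1) := by
  rcases eq_or_ne μ 0 with h | h
  · simp only [h, zero_smul, add_zero]
    exact Matrix.det_mul_comm X Y
  · have h1 : X * Y + μ • 1 = μ • ((μ⁻¹ • X) * Y + 1) := by
      rw [smul_add, Matrix.smul_mul, smul_smul, mul_inv_cancel₀ h, one_smul]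
    have h2 : Y * X + μ • 1 = μ • (Y * (μ⁻¹ • X) + 1) := by
      rw [smul_add, Matrix.mul_smul, smul_smul, mul_inv_cancel₀ h, one_smul]
    rw [h1, h2, Matrix.det_smul, Matrix.det_smul, Matrix.det_mul_add_one_comm]

theorem det_tr (C : Matrix k k ℂ) (μ : ℂ) (hμ : star μ = μ) :
    det ((Cᵀ)ᴴ * Cᵀ + μ • 1) = det (Cᴴ * C + μ • 1) := by
  have hmap : (Cᵀ)ᴴ * Cᵀ + μ • (1 : Matrix k k ℂ)
      = (C * Cᴴ + μ • 1).map (starRingEnd ℂ) := by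
    ext i j
    simp only [Matrix.add_apply, Matrix.mul_apply, Matrix.map_apply, Matrix.smul_apply,
      Matrix.one_apply, conjTranspose_apply, transpose_apply, map_add, map_sum,
      starRingEnd_apply, StarMul.star_mul, star_star, apply_ite (star : ℂ → ℂ), star_zero,
      star_one, hμ, smul_eq_mul, mul_ite, mul_zero, mul_one]
    congr 1
    exact Finset.sum_congr rfl fun x _ => mul_comm _ _
  rw [hmap, ← RingHom.mapMatrix_apply, ← RingHom.map_det, det_mul_add_smul_one C Cᴴ]
  have hherm : (Cᴴ * C + μ • (1 : Matrix k k ℂ))ᴴ = Cᴴ * C + μ • 1 := by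
    rw [conjTranspose_add, conjTranspose_mul, conjTranspose_conjTranspose,
      conjTranspose_smul, conjTranspose_one, hμ]
  calc (starRingEnd ℂ) (det (Cᴴ * C + μ • 1))
      = det ((Cᴴ * C + μ • (1 : Matrix k k ℂ))ᴴ) := by
        rw [Matrix.det_conjTranspose]; rfl
    _ = det (Cᴴ * C + μ • 1) := by rw [hherm]

theorem det_blocks_smul_one (P Q R : Matrix k k ℂ) (σ : ℂ) (hσ : σ ≠ 0) :
    det (fromBlocks P Q R (σ • (1 : Matrix k k ℂ))) = det (σ • P - Q * R) := by
  have hu : IsUnit (σ • (1 : Matrix k k ℂ)).det := by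
    simp [Matrix.det_smul, isUnit_iff_ne_zero, hσ]
  letI := Matrix.invertibleOfIsUnitDet _ hu
  have hinv : ⅟(σ • (1 : Matrix k k ℂ)) = σ⁻¹ • 1 := by
    apply invOf_eq_right_inv
    rw [Matrix.smul_mul, Matrix.mul_smul, smul_smul, mul_inv_cancel₀ hσ, one_smul, one_mul]
  rw [Matrix.det_fromBlocks₂₂, hinv]
  rw [Matrix.det_smul, Matrix.det_one, mul_one]
  rw [show P - Q * (σ⁻¹ • 1) * R = P - σ⁻¹ • (Q * R) by
    rw [Matrix.mul_smul, Matrix.mul_one, Matrix.smul_mul]]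
  rw [← Matrix.det_smul, smul_sub, smul_smul, mul_inv_cancel₀ hσ, one_smul]

theorem blocks_eq (B : Matrix k k ℂ) (b c d lam : ℂ) :
    lam • (1 : Matrix (k ⊕ k) (k ⊕ k) ℂ) -
      (fromBlocks B (b • 1) (c • 1) (d • 1))ᴴ * fromBlocks B (b • 1) (c • 1) (d • 1)
    = fromBlocks (lam • 1 - Bᴴ * B - (star c * c) • 1) (-(b • Bᴴ + (star c * d) • 1))
        (-(star b • B + (star d * c) • 1)) ((lam - star b * b - star d * d) • 1) := by
  rw [fromBlocks_conjTranspose, fromBlocks_multiply, ← fromBlocks_one (l := k) (m := k),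
    fromBlocks_smul, sub_eq_add_neg, fromBlocks_neg, fromBlocks_add, fromBlocks_inj]
  refine ⟨?_, ?_, ?_, ?_⟩ <;>
  · simp only [conjTranspose_smul, conjTranspose_one, Matrix.smul_mul, Matrix.mul_smul,
      smul_smul, Matrix.mul_one, Matrix.one_mul, smul_zero, add_zero, zero_add, smul_eq_mul]
    module

theorem det_lam (B : Matrix k k ℂ) (b c d lam σ u κ : ℂ) (t : ℝ) (ht : 1 ≤ t)
    (hlam : lam = star d * d - (t : ℂ) ^ 2)
    (hσ : σ = lam - star b * b - star d * d)
    (hu : u = b * c * star d)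
    (hκ : κ = σ * lam - σ * (star c * c) - star c * d * star d * c) :
    det (lam • (1 : Matrix (k ⊕ k) (k ⊕ k) ℂ) -
        (fromBlocks B (b • 1) (c • 1) (d • 1))ᴴ * fromBlocks B (b • 1) (c • 1) (d • 1))
      = det (((t : ℂ) ^ 2) • (Bᴴ * B) - u • Bᴴ - star u • B + κ • 1) := by
  subst hκ hu hσ hlam
  have hσ0 : star d * d - (t : ℂ) ^ 2 - star b * b - star d * d
      = Complex.ofReal (-(t ^ 2 + Complex.normSq b)) := by
    have hb : star b * b = (Complex.normSq b : ℂ) := by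
      rw [Complex.star_def, ← Complex.normSq_eq_conj_mul_self]
    rw [hb]; push_cast; ring
  have hσ0' : star d * d - (t : ℂ) ^ 2 - star b * b - star d * d ≠ 0 := by
    rw [hσ0, Complex.ofReal_ne_zero]
    nlinarith [Complex.normSq_nonneg b]
  rw [blocks_eq, det_blocks_smul_one _ _ _ _ hσ0']
  congr 1
  simp only [Matrix.add_mul, Matrix.mul_add, Matrix.smul_mul, Matrix.mul_smul, smul_smul,
    Matrix.mul_one, Matrix.one_mul, Matrix.neg_mul, Matrix.mul_neg, neg_neg, smul_sub, smul_add,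
    smul_neg, smul_eq_mul, StarMul.star_mul, star_star]
  module

theorem expand (B : Matrix k k ℂ) (t : ℝ) (w μ : ℂ) :
    (((t : ℂ) • B - w • 1)ᴴ) * ((t : ℂ) • B - w • 1) + μ • 1
      = ((t : ℂ) ^ 2) • (Bᴴ * B) - ((t : ℂ) * w) • Bᴴ - ((t : ℂ) * star w) • B
        + (star w * w + μ) • 1 := by
  simp only [conjTranspose_sub, conjTranspose_smul, conjTranspose_one, Complex.star_def,
    Complex.conj_ofReal, Matrix.sub_mul, Matrix.mul_sub, Matrix.smul_mul, Matrix.mul_smul,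
    smul_smul, Matrix.mul_one, Matrix.one_mul]
  module

/-- The key charpoly identity. -/
theorem cp_eq (A : Matrix k k ℂ) (b c d : ℂ) :
    ((fromBlocks Aᵀ (b • 1) (c • 1) (d • 1))ᴴ *
        fromBlocks Aᵀ (b • 1) (c • 1) (d • 1) : Matrix (k ⊕ k) (k ⊕ k) ℂ).charpoly
      = ((fromBlocks A (b • 1) (c • 1) (d • 1))ᴴ *
        fromBlocks A (b • 1) (c • 1) (d • 1) : Matrix (k ⊕ k) (k ⊕ k) ℂ).charpoly := by
  apply Polynomial.eq_of_infinite_eval_eq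
  apply Set.Infinite.mono
    (s := (fun t : ℝ => star d * d - (t : ℂ) ^ 2) '' Set.Ioi 1)
  · rintro x ⟨t, ht, rfl⟩
    rw [Set.mem_Ioi] at ht
    set lam : ℂ := star d * d - (t : ℂ) ^ 2 with hlam
    set σ : ℂ := lam - star b * b - star d * d with hσ
    set u : ℂ := b * c * star d with hu
    set κ : ℂ := σ * lam - σ * (star c * c) - star c * d * star d * c with hκ
    have ht0 : (t : ℂ) ≠ 0 := by
      simp only [ne_eq, Complex.ofReal_eq_zero]; nlinarith
    set w : ℂ := u / (t : ℂ) with hw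
    set μ : ℂ := κ - star w * w with hμ
    have htw : (t : ℂ) * w = u := by rw [hw]; field_simp
    have htsw : (t : ℂ) * star w = star u := by
      rw [hw, star_div₀, Complex.star_def, Complex.conj_ofReal]; field_simp
    have hwμκ : star w * w + μ = κ := by rw [hμ]; ring
    have hstar_lam : star lam = lam := by
      rw [hlam]
      simp only [star_sub, StarMul.star_mul, star_star, star_pow, Complex.star_def,
        Complex.conj_ofReal, Complex.conj_conj]
    have hstar_σ : star σ = σ := by
      rw [hσ]
      simp only [star_sub, StarMul.star_mul, star_star, hstar_lam, Complex.star_def, Complex.conj_conj]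
    have hstar_μ : star μ = μ := by
      rw [hμ, hκ]
      simp only [star_sub, star_add, StarMul.star_mul, star_star, hstar_lam, hstar_σ, Complex.star_def, Complex.conj_conj]
      ring
    have key : ∀ B : Matrix k k ℂ,
        Polynomial.eval lam ((fromBlocks B (b • 1) (c • 1) (d • 1))ᴴ *
            fromBlocks B (b • 1) (c • 1) (d • 1) : Matrix (k ⊕ k) (k ⊕ k) ℂ).charpoly
          = det ((((t : ℂ) • B - w • 1)ᴴ) * ((t : ℂ) • B - w • 1) + μ • 1) := by
      intro B
      rw [eval_cp, det_lam B b c d lam σ u κ t (le_of_lt ht) hlam hσ hu hκ,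
        expand, htw, htsw, hwμκ]
    rw [Set.mem_setOf_eq, key Aᵀ, key A]
    have h1t : ((t : ℂ) • A - w • 1)ᵀ = (t : ℂ) • Aᵀ - w • 1 := by
      rw [transpose_sub, transpose_smul, transpose_smul, transpose_one]
    rw [← h1t]
    exact det_tr _ μ hstar_μ
  · apply Set.Infinite.image
    · intro t1 ht1 t2 ht2 h
      rw [Set.mem_Ioi] at ht1 ht2
      have h2 : (t1 : ℂ) ^ 2 = (t2 : ℂ) ^ 2 := by
        have := sub_right_injective h
        exact this
      have h3 : t1 ^ 2 = t2 ^ 2 := by exact_mod_cast h2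
      have h4 : (t1 - t2) * (t1 + t2) = 0 := by nlinarith
      rcases mul_eq_zero.mp h4 with h5 | h5
      · linarith
      · linarith
    · exact Set.Ioi_infinite 1

end Stmt13Aux

/-- The map `Γ_n` is an isometry for the ℓ²→ℓ² operator norm:
`‖[[Aᵗ, b•I], [c•I, d•I]]‖ = ‖[[A, b•I], [c•I, d•I]]‖`. -/
theorem stmt13 (n : ℕ) (hn : 1 ≤ n) (A : Matrix (Fin n) (Fin n) ℂ) (b c d : ℂ) :
    ‖Matrix.fromBlocks Aᵀ (b • (1 : Matrix (Fin n) (Fin n) ℂ))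
        (c • (1 : Matrix (Fin n) (Fin n) ℂ)) (d • (1 : Matrix (Fin n) (Fin n) ℂ))‖ =
      ‖Matrix.fromBlocks A (b • (1 : Matrix (Fin n) (Fin n) ℂ))
        (c • (1 : Matrix (Fin n) (Fin n) ℂ)) (d • (1 : Matrix (Fin n) (Fin n) ℂ))‖ := by
  exact Stmt13Aux.norm_eq_of_cp _ _ (Stmt13Aux.cp_eq A b c d)
end

section
/- For every n ≥ 2, there is no linear map Ψ : M_{2n}(ℂ) → M_{2n}(ℂ) that maps positive semidefinite matrices to positive semidefinite matrices and satisfies Ψ([[A, b·I_n],[c·I_n, d·I_n]]) = [[Aᵗ, b·I_n],[c·I_n, d·I_n]] for all A ∈ M_n(ℂ) and b, c, d ∈ ℂ. (That is, the positive unital isometry Γ_n admits no positive extension to M_{2n}(ℂ).) -/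
set_option linter.unusedSectionVars false
set_option maxHeartbeats 1000000

open Matrix
open scoped ComplexOrder

section aux

variable {k l : Type*} [Fintype k] [Fintype l] [DecidableEq k] [DecidableEq l]

lemma aux_vmv_mulVec (v w x : k → ℂ) : vecMulVec v w *ᵥ x = (w ⬝ᵥ x) • v := by
  ext i
  simp only [mulVec, dotProduct, vecMulVec_apply, Pi.smul_apply, smul_eq_mul, Finset.sum_mul]
  exact Finset.sum_congr rfl fun j _ => by ring

lemma aux_vmv_transpose (v w : k → ℂ) : (vecMulVec v w)ᵀ = vecMulVec w v := by
  ext i j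
  simp [vecMulVec_apply, mul_comm]

lemma aux_vmv_add_left (a b c : k → ℂ) :
    vecMulVec (a + b) c = vecMulVec a c + vecMulVec b c := by
  ext i j
  simp [vecMulVec_apply]
  ring

lemma aux_vmv_smul_left (s : ℂ) (a c : k → ℂ) :
    vecMulVec (s • a) c = s • vecMulVec a c := by
  ext i j
  simp [vecMulVec_apply]
  ring

lemma aux_vmv_smul_right (s : ℂ) (a c : k → ℂ) :
    vecMulVec a (s • c) = s • vecMulVec a c := by
  ext i j
  simp [vecMulVec_apply]
  ring

lemma aux_outer_psd (v : k → ℂ) : (vecMulVec v (star v)).PosSemidef := by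
  refine posSemidef_iff_dotProduct_mulVec.mpr ?_
  constructor
  · ext i j
    simp only [conjTranspose_apply, vecMulVec_apply, Pi.star_apply, star_mul', star_star]
    ring
  · intro x
    rw [aux_vmv_mulVec, dotProduct_smul, smul_eq_mul]
    have h : star x ⬝ᵥ v = star (star v ⬝ᵥ x) := by
      rw [star_dotProduct]
    rw [h]
    exact mul_star_self_nonneg _

lemma aux_psd_zero : (0 : Matrix k k ℂ).PosSemidef := by
  constructor
  · simp [Matrix.IsHermitian]
  · intro x
    simp

lemma aux_add_kernel {A B : Matrix k k ℂ} (hA : A.PosSemidef) (hB : B.PosSemidef)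
    {z : k → ℂ} (h : (A + B) *ᵥ z = 0) : A *ᵥ z = 0 := by
  have h2 : star z ⬝ᵥ A *ᵥ z + star z ⬝ᵥ B *ᵥ z = 0 := by
    rw [← dotProduct_add, ← add_mulVec, h, dotProduct_zero]
  have h3 : star z ⬝ᵥ A *ᵥ z = 0 :=
    ((add_eq_zero_iff_of_nonneg (hA.dotProduct_mulVec_nonneg z) (hB.dotProduct_mulVec_nonneg z)).mp h2).1
  exact (hA.dotProduct_mulVec_zero_iff z).mp h3

lemma aux_herm_row {M : Matrix k k ℂ} (hM : M.IsHermitian) {z : k → ℂ}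
    (h : M *ᵥ z = 0) (y : k → ℂ) : star z ⬝ᵥ M *ᵥ y = 0 := by
  rw [dotProduct_mulVec]
  have h2 : star z ᵥ* M = 0 := by
    have h3 := congrArg star h
    rw [star_mulVec, hM.eq, star_zero] at h3
    exact h3
  rw [h2, zero_dotProduct]

lemma aux_star_single (m : k) : star (Pi.single m (1:ℂ) : k → ℂ) = Pi.single m 1 := by
  ext i
  rcases eq_or_ne i m with h | h <;> simp [Pi.single_apply, h]

lemma aux_sum_outer :
    ∑ m : k, vecMulVec (Pi.single m (1:ℂ) : k → ℂ) (Pi.single m 1) = 1 := by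
  ext a b
  simp only [Matrix.sum_apply, vecMulVec_apply, Pi.single_apply, one_apply, ite_mul, one_mul,
    zero_mul]
  rcases eq_or_ne a b with h | h
  · subst h
    simp
  · rw [if_neg h, Finset.sum_eq_zero]
    intro m _
    rcases eq_or_ne a m with h1 | h1
    · subst h1
      simp [Ne.symm h]
    · simp [h1]

lemma aux_psd_one_sub_outer (m : k) :
    ((1 : Matrix k k ℂ) - vecMulVec (Pi.single m 1) (Pi.single m 1)).PosSemidef := by
  have h1 : (1 : Matrix k k ℂ) - vecMulVec (Pi.single m 1) (Pi.single m 1)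
      = ∑ a ∈ Finset.univ.erase m, vecMulVec (Pi.single a (1:ℂ)) (Pi.single a 1) := by
    have h2 := Finset.add_sum_erase Finset.univ
      (fun a : k => vecMulVec (Pi.single a (1:ℂ) : k → ℂ) (Pi.single a 1)) (Finset.mem_univ m)
    rw [← aux_sum_outer, ← h2]
    abel
  rw [h1]
  refine Finset.sum_induction _ _ (fun a b ha hb => ha.add hb) aux_psd_zero ?_
  intro a _
  have := aux_outer_psd (Pi.single a (1:ℂ) : k → ℂ)
  rwa [aux_star_single] at this

lemma aux_psd_fromBlocks00 {C : Matrix l l ℂ} (hC : C.PosSemidef) :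
    (fromBlocks (0 : Matrix k k ℂ) 0 0 C).PosSemidef := by
  refine posSemidef_iff_dotProduct_mulVec.mpr ?_
  constructor
  · show _ = _
    rw [fromBlocks_conjTranspose]
    simp [hC.1.eq]
  · intro x
    rw [fromBlocks_mulVec]
    simp only [zero_mulVec, add_zero, zero_add]
    have hx : star x = Sum.elim (star (x ∘ Sum.inl)) (star (x ∘ Sum.inr)) := by
      ext (i | i) <;> rfl
    rw [hx, sumElim_dotProduct_sumElim, dotProduct_zero, zero_add]
    exact hC.dotProduct_mulVec_nonneg _

lemma aux_outer_blocks (u w : k → ℂ) :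
    vecMulVec (Sum.elim u w) (star (Sum.elim u w)) =
      fromBlocks (vecMulVec u (star u)) (vecMulVec u (star w))
        (vecMulVec w (star u)) (vecMulVec w (star w)) := by
  ext (i | i) (j | j) <;> simp [vecMulVec_apply, fromBlocks]

lemma aux_star_sum_elim (a : k → ℂ) (b : l → ℂ) :
    star (Sum.elim a b) = Sum.elim (star a) (star b) := by
  ext (i | i) <;> rfl

end aux

noncomputable section main

variable {n : ℕ}

def ee (n : ℕ) (m : Fin n) : Fin n → ℂ := Pi.single m 1

def EE (n : ℕ) (m : Fin n) : Matrix (Fin n) (Fin n) ℂ := vecMulVec (ee n m) (ee n m)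

lemma psd_EE (m : Fin n) : (EE n m).PosSemidef := by
  have := aux_outer_psd (ee n m)
  rwa [show star (ee n m) = ee n m from aux_star_single m] at this

lemma psd_one_sub_EE (m : Fin n) :
    ((1 : Matrix (Fin n) (Fin n) ℂ) - EE n m).PosSemidef :=
  aux_psd_one_sub_outer m

lemma star_ee (m : Fin n) : star (ee n m) = ee n m := aux_star_single m

variable (Ψ : Matrix (Fin n ⊕ Fin n) (Fin n ⊕ Fin n) ℂ →ₗ[ℂ]
        Matrix (Fin n ⊕ Fin n) (Fin n ⊕ Fin n) ℂ)

lemma kerR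
    (hpos : ∀ M : Matrix (Fin n ⊕ Fin n) (Fin n ⊕ Fin n) ℂ, M.PosSemidef → (Ψ M).PosSemidef)
    (hext : ∀ (A : Matrix (Fin n) (Fin n) ℂ) (b c d : ℂ),
        Ψ (Matrix.fromBlocks A (b • (1 : Matrix (Fin n) (Fin n) ℂ))
            (c • (1 : Matrix (Fin n) (Fin n) ℂ)) (d • (1 : Matrix (Fin n) (Fin n) ℂ))) =
          Matrix.fromBlocks Aᵀ (b • (1 : Matrix (Fin n) (Fin n) ℂ))
            (c • (1 : Matrix (Fin n) (Fin n) ℂ)) (d • (1 : Matrix (Fin n) (Fin n) ℂ)))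
    (m : Fin n) (ζ : Fin n → ℂ) :
    Ψ (fromBlocks 0 0 0 (EE n m)) *ᵥ Sum.elim ζ (0 : Fin n → ℂ) = 0 := by
  have hpsdR : (fromBlocks (0:Matrix (Fin n) (Fin n) ℂ) 0 0 (EE n m)).PosSemidef :=
    aux_psd_fromBlocks00 (psd_EE m)
  have hpsdS : (fromBlocks (0:Matrix (Fin n) (Fin n) ℂ) 0 0 (1 - EE n m)).PosSemidef :=
    aux_psd_fromBlocks00 (psd_one_sub_EE m)
  apply aux_add_kernel (hpos _ hpsdR) (hpos _ hpsdS)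
  have hsum : fromBlocks (0:Matrix (Fin n) (Fin n) ℂ) 0 0 (EE n m)
        + fromBlocks 0 0 0 (1 - EE n m)
      = fromBlocks 0 ((0:ℂ) • 1) ((0:ℂ) • 1) ((1:ℂ) • 1) := by
    rw [fromBlocks_add]
    simp
  rw [← map_add, hsum, hext]
  rw [fromBlocks_mulVec]
  ext (i | i) <;> simp

lemma key
    (hpos : ∀ M : Matrix (Fin n ⊕ Fin n) (Fin n ⊕ Fin n) ℂ, M.PosSemidef → (Ψ M).PosSemidef)
    (hext : ∀ (A : Matrix (Fin n) (Fin n) ℂ) (b c d : ℂ),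
        Ψ (Matrix.fromBlocks A (b • (1 : Matrix (Fin n) (Fin n) ℂ))
            (c • (1 : Matrix (Fin n) (Fin n) ℂ)) (d • (1 : Matrix (Fin n) (Fin n) ℂ))) =
          Matrix.fromBlocks Aᵀ (b • (1 : Matrix (Fin n) (Fin n) ℂ))
            (c • (1 : Matrix (Fin n) (Fin n) ℂ)) (d • (1 : Matrix (Fin n) (Fin n) ℂ)))
    (u ζ : Fin n → ℂ) (hu : u ⬝ᵥ ζ = 0) (m j : Fin n) :
    star (Sum.elim ζ (0 : Fin n → ℂ)) ⬝ᵥ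
      (Ψ (fromBlocks 0 (vecMulVec u (ee n m)) 0 0) *ᵥ Sum.elim (0 : Fin n → ℂ) (ee n j)) = 0 := by
  set z : Fin n ⊕ Fin n → ℂ := Sum.elim ζ (0 : Fin n → ℂ) with hz
  set y : Fin n ⊕ Fin n → ℂ := Sum.elim (0 : Fin n → ℂ) (ee n j) with hy
  set TL : Matrix (Fin n ⊕ Fin n) (Fin n ⊕ Fin n) ℂ :=
    fromBlocks (vecMulVec u (star u)) 0 0 0 with hTL
  set P : Matrix (Fin n ⊕ Fin n) (Fin n ⊕ Fin n) ℂ :=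
    fromBlocks 0 (vecMulVec u (ee n m)) 0 0 with hP
  set Q : Matrix (Fin n ⊕ Fin n) (Fin n ⊕ Fin n) ℂ :=
    fromBlocks 0 0 (vecMulVec (ee n m) (star u)) 0 with hQ
  set R : Matrix (Fin n ⊕ Fin n) (Fin n ⊕ Fin n) ℂ :=
    fromBlocks 0 0 0 (EE n m) with hR
  set S : Matrix (Fin n ⊕ Fin n) (Fin n ⊕ Fin n) ℂ :=
    fromBlocks 0 0 0 (1 - EE n m) with hS
  have hpsdR : R.PosSemidef := aux_psd_fromBlocks00 (psd_EE m)
  have hpsdS : S.PosSemidef := aux_psd_fromBlocks00 (psd_one_sub_EE m)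
  -- value of Ψ TL against z, y
  have hTLval : star z ⬝ᵥ (Ψ TL *ᵥ y) = 0 := by
    have h1 : TL = fromBlocks (vecMulVec u (star u)) ((0:ℂ) • 1) ((0:ℂ) • 1) ((0:ℂ) • 1) := by
      rw [hTL]; simp
    rw [h1, hext]
    rw [fromBlocks_mulVec]
    have : (Ψ : _) = Ψ := rfl
    have hy1 : y ∘ Sum.inl = (0 : Fin n → ℂ) := by ext i; simp [hy]
    have hy2 : y ∘ Sum.inr = ee n j := by ext i; simp [hy]
    rw [hy1, hy2]
    simp [hz, aux_star_sum_elim, sumElim_dotProduct_sumElim]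
  have hRval : star z ⬝ᵥ (Ψ R *ᵥ y) = 0 :=
    aux_herm_row (hpos R hpsdR).1 (kerR Ψ hpos hext m ζ) y
  -- the λ-claim
  have hgen : ∀ s : ℂ, vecMulVec (Sum.elim u (s • ee n m)) (star (Sum.elim u (s • ee n m)))
      = TL + star s • P + s • Q + (s * star s) • R := by
    intro s
    rw [aux_outer_blocks, star_smul, star_ee]
    simp only [aux_vmv_smul_left, aux_vmv_smul_right, smul_smul]
    rw [hTL, hP, hQ, hR]
    simp only [fromBlocks_smul, fromBlocks_add, smul_zero, add_zero, zero_add]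
    rw [mul_comm s (star s)]
    rfl
  have claim : ∀ lam : ℂ, lam * star lam = 1 →
      star lam * (star z ⬝ᵥ (Ψ P *ᵥ y)) + lam * (star z ⬝ᵥ (Ψ Q *ᵥ y)) = 0 := by
    intro lam hlam
    set v : Fin n ⊕ Fin n → ℂ := Sum.elim u (lam • ee n m) with hv
    set v' : Fin n ⊕ Fin n → ℂ := Sum.elim u ((-lam) • ee n m) with hv'
    set X := vecMulVec v (star v) with hX
    set X' := vecMulVec v' (star v') with hX'
    have hXd : X = TL + star lam • P + lam • Q + R := by
      rw [hX, hv, hgen lam, hlam, one_smul]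
    have hX'd : X' = TL + (-(star lam)) • P + (-lam) • Q + R := by
      rw [hX', hv', hgen (-lam)]
      rw [show (-lam) * star (-lam) = lam * star lam by simp]
      rw [hlam, one_smul, star_neg]
    have hRS : R + S = fromBlocks 0 0 0 (1 : Matrix (Fin n) (Fin n) ℂ) := by
      rw [hR, hS, fromBlocks_add]
      simp
    have hRHS : TL + TL + ((R + S) + (R + S)) =
        fromBlocks (vecMulVec u (star u) + vecMulVec u (star u))
          ((0:ℂ) • 1) ((0:ℂ) • 1) ((2:ℂ) • 1) := by
      rw [hRS, hTL, fromBlocks_add, fromBlocks_add, fromBlocks_add]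
      simp [two_smul]
    have hN : X + (X' + (S + S)) =
        fromBlocks (vecMulVec u (star u) + vecMulVec u (star u))
          ((0:ℂ) • 1) ((0:ℂ) • 1) ((2:ℂ) • 1) := by
      rw [hXd, hX'd, ← hRHS]
      module
    have hNker : Ψ (fromBlocks (vecMulVec u (star u) + vecMulVec u (star u))
        ((0:ℂ) • 1) ((0:ℂ) • 1) ((2:ℂ) • 1)) *ᵥ z = 0 := by
      rw [hext, fromBlocks_mulVec, transpose_add, aux_vmv_transpose]
      ext (i | i)
      · simp [hz, add_mulVec, aux_vmv_mulVec, hu]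
      · simp [hz]
    have hpsdX : X.PosSemidef := hX ▸ aux_outer_psd v
    have hpsdX' : X'.PosSemidef := hX' ▸ aux_outer_psd v'
    have hXker : Ψ X *ᵥ z = 0 := by
      apply aux_add_kernel (hpos X hpsdX)
        (hpos (X' + (S + S)) (hpsdX'.add (hpsdS.add hpsdS)))
      rw [← map_add, hN]
      exact hNker
    have hphiX : star z ⬝ᵥ (Ψ X *ᵥ y) = 0 := aux_herm_row (hpos X hpsdX).1 hXker y
    rw [hXd] at hphiX
    simp only [map_add, LinearMap.map_smul, add_mulVec, smul_mulVec, dotProduct_add,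
      dotProduct_smul, smul_eq_mul] at hphiX
    linear_combination hphiX - hTLval - hRval
  have h1 := claim 1 (by simp)
  have hI := claim Complex.I (by
    rw [Complex.star_def, Complex.conj_I, mul_neg, Complex.I_mul_I, neg_neg])
  rw [star_one, one_mul, one_mul] at h1
  rw [Complex.star_def, Complex.conj_I] at hI
  have h5 : Complex.I * ((star z ⬝ᵥ (Ψ Q *ᵥ y)) - (star z ⬝ᵥ (Ψ P *ᵥ y))) = 0 := by
    linear_combination hI
  rcases mul_eq_zero.mp h5 with h6 | h6
  · exact absurd h6 Complex.I_ne_zero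
  · linear_combination h1 / 2 - h6 / 2

end main

/-- For `n ≥ 2` there is no positive linear map `Ψ` on `M_{2n}(ℂ)` extending the
positive unital isometry `Γ_n` on the operator system `T_n`. -/
theorem stmt16 (n : ℕ) (hn : 2 ≤ n) :
    ¬ ∃ Ψ : Matrix (Fin n ⊕ Fin n) (Fin n ⊕ Fin n) ℂ →ₗ[ℂ]
        Matrix (Fin n ⊕ Fin n) (Fin n ⊕ Fin n) ℂ,
      (∀ M : Matrix (Fin n ⊕ Fin n) (Fin n ⊕ Fin n) ℂ, M.PosSemidef → (Ψ M).PosSemidef) ∧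
      (∀ (A : Matrix (Fin n) (Fin n) ℂ) (b c d : ℂ),
        Ψ (Matrix.fromBlocks A (b • (1 : Matrix (Fin n) (Fin n) ℂ))
            (c • (1 : Matrix (Fin n) (Fin n) ℂ)) (d • (1 : Matrix (Fin n) (Fin n) ℂ))) =
          Matrix.fromBlocks Aᵀ (b • (1 : Matrix (Fin n) (Fin n) ℂ))
            (c • (1 : Matrix (Fin n) (Fin n) ℂ)) (d • (1 : Matrix (Fin n) (Fin n) ℂ))) := by
  rintro ⟨Ψ, hpos, hext⟩
  have h1n : 1 < n := hn
  have h0n : 0 < n := by omega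
  set i0 : Fin n := ⟨0, h0n⟩ with hi0
  set i1 : Fin n := ⟨1, h1n⟩ with hi1
  have hne : i0 ≠ i1 := by simp [hi0, hi1, Fin.ext_iff]
  set W : Matrix (Fin n) (Fin n) ℂ → (Fin n → ℂ) → ℂ := fun B ζ =>
    star (Sum.elim ζ (0 : Fin n → ℂ)) ⬝ᵥ
      (Ψ (fromBlocks 0 B 0 0) *ᵥ Sum.elim (0 : Fin n → ℂ) (ee n i0)) with hW
  -- dot product basics
  have hd0 : ∀ m : Fin n, ee n m ⬝ᵥ ee n m = 1 := by
    intro m; simp [ee, dotProduct_single, Pi.single_apply]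
  have hd1 : ∀ m m' : Fin n, m ≠ m' → ee n m ⬝ᵥ ee n m' = 0 := by
    intro m m' h; simp [ee, dotProduct_single, Pi.single_apply, h]
  -- linearity of W
  have hWaddB : ∀ (B C : Matrix (Fin n) (Fin n) ℂ) (ζ : Fin n → ℂ),
      W (B + C) ζ = W B ζ + W C ζ := by
    intro B C ζ
    simp only [hW]
    rw [show (fromBlocks 0 (B + C) 0 0 : Matrix (Fin n ⊕ Fin n) (Fin n ⊕ Fin n) ℂ)
        = fromBlocks 0 B 0 0 + fromBlocks 0 C 0 0 by rw [fromBlocks_add]; simp]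
    rw [map_add, add_mulVec, dotProduct_add]
  have hWsmulB : ∀ (c : ℂ) (B : Matrix (Fin n) (Fin n) ℂ) (ζ : Fin n → ℂ),
      W (c • B) ζ = c * W B ζ := by
    intro c B ζ
    simp only [hW]
    rw [show (fromBlocks 0 (c • B) 0 0 : Matrix (Fin n ⊕ Fin n) (Fin n ⊕ Fin n) ℂ)
        = c • fromBlocks 0 B 0 0 by rw [fromBlocks_smul]; simp]
    rw [LinearMap.map_smul, smul_mulVec, dotProduct_smul, smul_eq_mul]
  have hWaddZ : ∀ (B : Matrix (Fin n) (Fin n) ℂ) (ζ ζ' : Fin n → ℂ),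
      W B (ζ + ζ') = W B ζ + W B ζ' := by
    intro B ζ ζ'
    simp only [hW]
    rw [show Sum.elim (ζ + ζ') (0 : Fin n → ℂ) = Sum.elim ζ 0 + Sum.elim ζ' 0 by
      ext (i | i) <;> simp]
    rw [star_add, add_dotProduct]
  have hWsmulZ : ∀ (c : ℂ) (B : Matrix (Fin n) (Fin n) ℂ) (ζ : Fin n → ℂ),
      W B (c • ζ) = star c * W B ζ := by
    intro c B ζ
    simp only [hW]
    rw [show Sum.elim (c • ζ) (0 : Fin n → ℂ) = c • Sum.elim ζ 0 by
      ext (i | i) <;> simp]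
    rw [star_smul, smul_dotProduct, smul_eq_mul]
  have hWsubZ : ∀ (B : Matrix (Fin n) (Fin n) ℂ) (ζ ζ' : Fin n → ℂ),
      W B (ζ - ζ') = W B ζ - W B ζ' := by
    intro B ζ ζ'
    rw [sub_eq_add_neg, show -ζ' = (-1 : ℂ) • ζ' by simp, hWaddZ, hWsmulZ]
    simp
    ring
  -- key instances
  have hKey : ∀ (u ζ : Fin n → ℂ), u ⬝ᵥ ζ = 0 → ∀ m : Fin n,
      W (vecMulVec u (ee n m)) ζ = 0 := fun u ζ h m => key Ψ hpos hext u ζ h m i0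
  have ha1 : W (vecMulVec (ee n i1) (ee n i0)) (ee n i0) = 0 :=
    hKey _ _ (hd1 i1 i0 (Ne.symm hne)) i0
  have ha2 : W (EE n i0) (ee n i1) = 0 := hKey _ _ (hd1 i0 i1 hne) i0
  have horth1 : (ee n i0 + ee n i1) ⬝ᵥ (ee n i0 - ee n i1) = 0 := by
    rw [add_dotProduct, dotProduct_sub, dotProduct_sub, hd0, hd0,
      hd1 i0 i1 hne, hd1 i1 i0 (Ne.symm hne)]
    ring
  have horth2 : (ee n i0 + Complex.I • ee n i1) ⬝ᵥ (ee n i0 + Complex.I • ee n i1) = 0 := by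
    simp only [add_dotProduct, dotProduct_add, smul_dotProduct, dotProduct_smul, smul_eq_mul]
    rw [hd0, hd1 i0 i1 hne, hd1 i1 i0 (Ne.symm hne), hd0]
    linear_combination Complex.I_mul_I
  have hb : W (EE n i0) (ee n i0 - ee n i1)
      + W (vecMulVec (ee n i1) (ee n i0)) (ee n i0 - ee n i1) = 0 := by
    have h := hKey _ _ horth1 i0
    rw [aux_vmv_add_left, hWaddB] at h
    exact h
  have hc : W (EE n i0) (ee n i0 + Complex.I • ee n i1)
      + Complex.I * W (vecMulVec (ee n i1) (ee n i0)) (ee n i0 + Complex.I • ee n i1) = 0 := by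
    have h := hKey _ _ horth2 i0
    rw [aux_vmv_add_left, aux_vmv_smul_left, hWaddB, hWsmulB] at h
    exact h
  -- expand hb, hc
  have hb' : W (EE n i0) (ee n i0) = W (vecMulVec (ee n i1) (ee n i0)) (ee n i1) := by
    rw [hWsubZ, hWsubZ, ha1, ha2] at hb
    linear_combination hb
  have hc' : W (EE n i0) (ee n i0)
      + W (vecMulVec (ee n i1) (ee n i0)) (ee n i1) = 0 := by
    rw [hWaddZ, hWaddZ, hWsmulZ, hWsmulZ, ha1, ha2, Complex.star_def, Complex.conj_I] at hc
    linear_combination hc + (W (vecMulVec (ee n i1) (ee n i0)) (ee n i1)) * Complex.I_mul_I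
  have hz0 : W (EE n i0) (ee n i0) = 0 := by
    linear_combination hb' / 2 + hc' / 2
  have hz1 : ∀ m : Fin n, W (EE n m) (ee n i0) = 0 := by
    intro m
    rcases eq_or_ne m i0 with h | h
    · subst h; exact hz0
    · exact hKey _ _ (hd1 m i0 h) m
  -- linear functional
  let L : Matrix (Fin n) (Fin n) ℂ →ₗ[ℂ] ℂ :=
    { toFun := fun B => W B (ee n i0)
      map_add' := fun B C => hWaddB B C _
      map_smul' := fun c B => hWsmulB c B _ }
  have hL1 : L 1 = 1 := by
    show W 1 (ee n i0) = 1
    have hΨ1 : Ψ (fromBlocks 0 1 0 0) = fromBlocks 0 1 0 0 := by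
      have h := hext 0 1 0 0
      simpa using h
    simp only [hW]
    rw [hΨ1, fromBlocks_mulVec]
    rw [aux_star_sum_elim]
    have h1 : (Sum.elim (0 : Fin n → ℂ) (ee n i0)) ∘ Sum.inl = 0 := rfl
    have h2 : (Sum.elim (0 : Fin n → ℂ) (ee n i0)) ∘ Sum.inr = ee n i0 := rfl
    rw [h1, h2]
    simp only [zero_mulVec, mulVec_zero, one_mulVec, add_zero, zero_add]
    rw [sumElim_dotProduct_sumElim, star_ee, hd0]
    simp
  have hLsum : L 1 = 0 := by
    have hone : (1 : Matrix (Fin n) (Fin n) ℂ) = ∑ m : Fin n, EE n m := aux_sum_outer.symm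
    rw [hone, map_sum]
    apply Finset.sum_eq_zero
    intro m _
    exact hz1 m
  rw [hL1] at hLsum
  exact one_ne_zero hLsum
end

section
/- Let n ≥ 1. The linear map Ψ_n : M_{2n}(ℝ) → M_{2n}(ℝ) defined on blocks by Ψ_n([[A, B],[C, D]]) = [[Aᵗ, B],[C, D]] maps positive semidefinite real matrices to positive semidefinite real matrices; moreover Ψ_n([[A, b·I_n],[c·I_n, d·I_n]]) = [[Aᵗ, b·I_n],[c·I_n, d·I_n]] for all A ∈ M_n(ℝ) and b, c, d ∈ ℝ, so Ψ_n is a positive extension to M_{2n}(ℝ) of the restriction of Γ_n to the real operator system R_n. -/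
open Matrix

/-- The map `Ψ_n : M_{2n}(ℝ) → M_{2n}(ℝ)`, `[[A, B], [C, D]] ↦ [[Aᵗ, B], [C, D]]`,
is positivity preserving, and it agrees with `Γ_n` on the real operator system `R_n`
(i.e. `Ψ_n([[A, b•I], [c•I, d•I]]) = [[Aᵗ, b•I], [c•I, d•I]]`), so it is a positive
extension of the restriction of `Γ_n` to `R_n`. -/
theorem stmt17 (n : ℕ) (hn : 1 ≤ n)
    (Ψ : Matrix (Fin n ⊕ Fin n) (Fin n ⊕ Fin n) ℝ → Matrix (Fin n ⊕ Fin n) (Fin n ⊕ Fin n) ℝ)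
    (hΨ : ∀ A B C D : Matrix (Fin n) (Fin n) ℝ,
      Ψ (Matrix.fromBlocks A B C D) = Matrix.fromBlocks Aᵀ B C D) :
    (∀ M : Matrix (Fin n ⊕ Fin n) (Fin n ⊕ Fin n) ℝ, M.PosSemidef → (Ψ M).PosSemidef) ∧
    (∀ (A : Matrix (Fin n) (Fin n) ℝ) (b c d : ℝ),
      Ψ (Matrix.fromBlocks A (b • (1 : Matrix (Fin n) (Fin n) ℝ))
          (c • (1 : Matrix (Fin n) (Fin n) ℝ)) (d • (1 : Matrix (Fin n) (Fin n) ℝ))) =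
        Matrix.fromBlocks Aᵀ (b • (1 : Matrix (Fin n) (Fin n) ℝ))
          (c • (1 : Matrix (Fin n) (Fin n) ℝ)) (d • (1 : Matrix (Fin n) (Fin n) ℝ))) := by
  constructor
  · intro M hM
    have hA : (M.toBlocks₁₁)ᵀ = M.toBlocks₁₁ := by
      ext i j
      have := congrFun (congrFun hM.1 (Sum.inl i)) (Sum.inl j)
      simpa [Matrix.conjTranspose, Matrix.toBlocks₁₁] using this
    have : Ψ M = M := by
      conv_lhs => rw [← M.fromBlocks_toBlocks]
      rw [hΨ, hA, M.fromBlocks_toBlocks]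
    rwa [this]
  · intro A b c d
    exact hΨ A _ _ _
end

section
/- Let 1 ≤ n ≤ 4. The map Φ_n is completely positive: for every k ≥ 1, if a positive semidefinite matrix in M_k(M_{2n}(ℂ)) has all of its (i,j) blocks of the form [[a_{ij}·I_n, B_{ij}],[C_{ij}, d_{ij}·I_n]] with a_{ij}, d_{ij} ∈ ℂ and B_{ij}, C_{ij} ∈ M_n(ℂ), then the matrix obtained by applying Φ_n to each block, i.e., with (i,j) block [[a_{ij}·I_n, (1/4)·B_{ij}ᵗ],[(1/4)·C_{ij}ᵗ, d_{ij}·I_n]], is positive semidefinite. -/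
open Matrix
open scoped ComplexOrder
open scoped Kronecker


noncomputable def myV (n : ℕ) : (Fin n × Fin n) ⊕ Fin 2 → Matrix (Fin n ⊕ Fin n) (Fin n ⊕ Fin n) ℂ
  | .inl pq => Matrix.fromBlocks ((1/2 : ℂ) • Matrix.single pq.1 pq.2 1) 0 0
      ((1/2 : ℂ) • Matrix.single pq.2 pq.1 1)
  | .inr 0 => Matrix.fromBlocks (((Real.sqrt (1 - n/4) : ℝ) : ℂ) • 1) 0 0 0
  | .inr 1 => Matrix.fromBlocks 0 0 0 (((Real.sqrt (1 - n/4) : ℝ) : ℂ) • 1)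

lemma eme {n : ℕ} (M : Matrix (Fin n) (Fin n) ℂ) (p q p' q' : Fin n) :
    Matrix.single p q (1:ℂ) * M * Matrix.single p' q' 1
      = M q p' • Matrix.single p q' 1 := by
  ext i j
  simp [Matrix.mul_apply, Matrix.single, ite_and, Finset.sum_ite_eq,
    Finset.sum_ite_eq', mul_ite, ite_mul, mul_zero, zero_mul, Finset.mul_sum, Finset.sum_mul]
  split_ifs <;> simp_all

lemma ct_std {n : ℕ} (p q : Fin n) :
    (Matrix.single p q (1:ℂ))ᴴ = Matrix.single q p 1 := by
  ext i j
  simp [Matrix.conjTranspose_apply, Matrix.single, and_comm]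

lemma sum_diag_std {n : ℕ} : ∑ p : Fin n, Matrix.single p p (1:ℂ) = 1 := by
  ext i j
  simp [Matrix.sum_apply, Matrix.single, Matrix.one_apply, ite_and,
    Finset.sum_ite_eq', eq_comm]

lemma key_s18 (n : ℕ) (hn4 : n ≤ 4) (a d : ℂ) (B C : Matrix (Fin n) (Fin n) ℂ) :
    ∑ s : (Fin n × Fin n) ⊕ Fin 2,
      myV n s * Matrix.fromBlocks (a • 1) B C (d • 1) * (myV n s)ᴴ =
    Matrix.fromBlocks (a • 1) ((1/4 : ℂ) • Bᵀ) ((1/4 : ℂ) • Cᵀ) (d • 1) := by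
  have ht : ((Real.sqrt (1 - n/4) : ℝ) : ℂ) * ((Real.sqrt (1 - n/4) : ℝ) : ℂ)
      = 1 - (n : ℂ)/4 := by
    rw [← Complex.ofReal_mul, Real.mul_self_sqrt (by
      have : (n:ℝ) ≤ 4 := by exact_mod_cast hn4
      linarith)]
    push_cast; ring
  rw [Fintype.sum_sum_type, Fin.sum_univ_two]
  have hterm : ∀ pq : Fin n × Fin n,
      myV n (.inl pq) * Matrix.fromBlocks (a • 1) B C (d • 1) * (myV n (.inl pq))ᴴ
        = Matrix.fromBlocks ((a/4) • Matrix.single pq.1 pq.1 1)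
            ((B pq.2 pq.1/4) • Matrix.single pq.1 pq.2 1)
            ((C pq.1 pq.2/4) • Matrix.single pq.2 pq.1 1)
            ((d/4) • Matrix.single pq.2 pq.2 1) := by
    intro pq
    simp only [myV, Matrix.fromBlocks_conjTranspose,
      Matrix.fromBlocks_multiply, Matrix.conjTranspose_smul, Matrix.conjTranspose_zero,
      Matrix.mul_zero, Matrix.zero_mul, add_zero, zero_add, Matrix.smul_mul,
      Matrix.mul_smul, Matrix.mul_one, Matrix.one_mul, smul_smul, ct_std,
      Matrix.one_mul]
    simp only [smul_zero, Matrix.smul_mul, add_zero, zero_add, smul_smul,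
      Matrix.single_mul_single_same, eme, mul_one]
    have hs : (star (1/2 : ℂ)) = 1/2 := by norm_num
    rw [hs, Matrix.fromBlocks_inj]
    refine ⟨?_, ?_, ?_, ?_⟩ <;> (congr 1; ring)
  have hsum : ∀ (A B' C' D : Fin n × Fin n → Matrix (Fin n) (Fin n) ℂ),
      ∑ pq : Fin n × Fin n, Matrix.fromBlocks (A pq) (B' pq) (C' pq) (D pq)
        = Matrix.fromBlocks (∑ pq, A pq) (∑ pq, B' pq) (∑ pq, C' pq) (∑ pq, D pq) := by
    intro A B' C' D
    ext (r | r) (r' | r') <;> simp [Matrix.sum_apply, Matrix.fromBlocks]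
  have h1 : ∀ x : ℂ, ∑ pq : Fin n × Fin n, (x/4) • Matrix.single pq.1 pq.1 (1:ℂ)
      = ((n:ℂ)*x/4) • 1 := by
    intro x
    ext i j
    simp [Matrix.sum_apply, Matrix.single, Fintype.sum_prod_type, ite_and,
      Finset.sum_ite_eq', Matrix.one_apply, apply_ite, mul_ite, mul_zero]
    split_ifs <;> simp [Finset.sum_const, nsmul_eq_mul] <;> ring
  have h1' : ∀ x : ℂ, ∑ pq : Fin n × Fin n, (x/4) • Matrix.single pq.2 pq.2 (1:ℂ)
      = ((n:ℂ)*x/4) • 1 := by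
    intro x
    ext i j
    simp [Matrix.sum_apply, Matrix.single, Fintype.sum_prod_type, ite_and,
      Finset.sum_ite_eq', Matrix.one_apply, apply_ite, mul_ite, mul_zero]
    split_ifs <;> simp [Finset.sum_const, nsmul_eq_mul] <;> ring
  have h2 : ∑ pq : Fin n × Fin n, (B pq.2 pq.1/4) • Matrix.single pq.1 pq.2 (1:ℂ)
      = (1/4:ℂ) • Bᵀ := by
    ext i j
    simp [Matrix.sum_apply, Matrix.single, Fintype.sum_prod_type, ite_and,
      Finset.sum_ite_eq', Finset.sum_ite_eq, apply_ite, mul_ite, mul_zero]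
    ring
  have h3 : ∑ pq : Fin n × Fin n, (C pq.1 pq.2/4) • Matrix.single pq.2 pq.1 (1:ℂ)
      = (1/4:ℂ) • Cᵀ := by
    ext i j
    simp [Matrix.sum_apply, Matrix.single, Fintype.sum_prod_type, ite_and,
      Finset.sum_ite_eq', Finset.sum_ite_eq, apply_ite, mul_ite, mul_zero]
    ring
  simp_rw [hterm]
  rw [hsum, h1, h1', h2, h3]
  have hr0 : myV n (.inr 0) * Matrix.fromBlocks (a • 1) B C (d • 1) * (myV n (.inr 0))ᴴ
      = Matrix.fromBlocks (((1 - (n:ℂ)/4) * a) • 1) 0 0 0 := by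
    simp only [myV, Matrix.fromBlocks_conjTranspose, Matrix.fromBlocks_multiply,
      Matrix.conjTranspose_smul, Matrix.conjTranspose_zero, Matrix.conjTranspose_one,
      Matrix.mul_zero, Matrix.zero_mul, add_zero, zero_add, Matrix.smul_mul,
      Matrix.mul_smul, Matrix.mul_one, Matrix.one_mul, smul_smul, smul_zero]
    congr 2
    rw [Complex.star_def, Complex.conj_ofReal]
    rw [show ((Real.sqrt (1 - n/4) : ℝ) : ℂ) * (a * ((Real.sqrt (1 - n/4) : ℝ) : ℂ))
      = (((Real.sqrt (1 - n/4) : ℝ) : ℂ) * ((Real.sqrt (1 - n/4) : ℝ) : ℂ)) * a by ring, ht]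
  have hr1 : myV n (.inr 1) * Matrix.fromBlocks (a • 1) B C (d • 1) * (myV n (.inr 1))ᴴ
      = Matrix.fromBlocks 0 0 0 (((1 - (n:ℂ)/4) * d) • 1) := by
    simp only [myV, Matrix.fromBlocks_conjTranspose, Matrix.fromBlocks_multiply,
      Matrix.conjTranspose_smul, Matrix.conjTranspose_zero, Matrix.conjTranspose_one,
      Matrix.mul_zero, Matrix.zero_mul, add_zero, zero_add, Matrix.smul_mul,
      Matrix.mul_smul, Matrix.mul_one, Matrix.one_mul, smul_smul, smul_zero]
    congr 2
    rw [Complex.star_def, Complex.conj_ofReal]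
    rw [show ((Real.sqrt (1 - n/4) : ℝ) : ℂ) * (d * ((Real.sqrt (1 - n/4) : ℝ) : ℂ))
      = (((Real.sqrt (1 - n/4) : ℝ) : ℂ) * ((Real.sqrt (1 - n/4) : ℝ) : ℂ)) * d by ring, ht]
  rw [hr0, hr1, Matrix.fromBlocks_add, Matrix.fromBlocks_add, Matrix.fromBlocks_inj]
  refine ⟨?_, by simp, by simp, ?_⟩
  · rw [add_zero, ← add_smul]; congr 1; ring
  · rw [zero_add, ← add_smul]; congr 1; ring

lemma kron_conj_entry {k : ℕ} {α : Type} [Fintype α] [DecidableEq α]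
    (V : Matrix α α ℂ) (M : Matrix (Fin k × α) (Fin k × α) ℂ) (i j : Fin k) (p q : α) :
    (((1 : Matrix (Fin k) (Fin k) ℂ) ⊗ₖ V) * M * (((1 : Matrix (Fin k) (Fin k) ℂ) ⊗ₖ V))ᴴ)
        (i, p) (j, q)
      = (V * (Matrix.of fun r r' => M (i, r) (j, r')) * Vᴴ) p q := by
  simp [Matrix.mul_apply, Matrix.kroneckerMap_apply, Matrix.one_apply,
    Fintype.sum_prod_type, Matrix.conjTranspose_apply, ite_mul, mul_ite,
    zero_mul, mul_zero, Finset.sum_ite_eq, Finset.sum_ite_eq', apply_ite (starRingEnd ℂ),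
    map_zero, Finset.sum_ite_irrel, Finset.sum_const_zero]


/-- For `1 ≤ n ≤ 4` the map `Φ_n` is completely positive: for every `k ≥ 1`, if the
matrix in `M_k(M_{2n}(ℂ))` whose `(i,j)` block is `[[a i j • I, B i j], [C i j, d i j • I]]`
is positive semidefinite, then so is the matrix whose `(i,j)` block is
`Φ_n([[a i j • I, B i j], [C i j, d i j • I]]) =
  [[a i j • I, (1/4) • (B i j)ᵗ], [(1/4) • (C i j)ᵗ, d i j • I]]`. -/
theorem stmt18 (n : ℕ) (hn1 : 1 ≤ n) (hn4 : n ≤ 4) (k : ℕ) (hk : 1 ≤ k)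
    (a d : Fin k → Fin k → ℂ) (B C : Fin k → Fin k → Matrix (Fin n) (Fin n) ℂ)
    (hpos : (Matrix.of fun (ip jq : Fin k × (Fin n ⊕ Fin n)) =>
        Matrix.fromBlocks (a ip.1 jq.1 • (1 : Matrix (Fin n) (Fin n) ℂ)) (B ip.1 jq.1)
          (C ip.1 jq.1) (d ip.1 jq.1 • (1 : Matrix (Fin n) (Fin n) ℂ)) ip.2 jq.2).PosSemidef) :
    (Matrix.of fun (ip jq : Fin k × (Fin n ⊕ Fin n)) =>
        Matrix.fromBlocks (a ip.1 jq.1 • (1 : Matrix (Fin n) (Fin n) ℂ))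
          ((1 / 4 : ℂ) • (B ip.1 jq.1)ᵀ) ((1 / 4 : ℂ) • (C ip.1 jq.1)ᵀ)
          (d ip.1 jq.1 • (1 : Matrix (Fin n) (Fin n) ℂ)) ip.2 jq.2).PosSemidef := by
  set M : Matrix (Fin k × (Fin n ⊕ Fin n)) (Fin k × (Fin n ⊕ Fin n)) ℂ :=
    Matrix.of fun ip jq =>
      Matrix.fromBlocks (a ip.1 jq.1 • (1 : Matrix (Fin n) (Fin n) ℂ)) (B ip.1 jq.1)
        (C ip.1 jq.1) (d ip.1 jq.1 • (1 : Matrix (Fin n) (Fin n) ℂ)) ip.2 jq.2 with hMdef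
  have heq : (Matrix.of fun (ip jq : Fin k × (Fin n ⊕ Fin n)) =>
        Matrix.fromBlocks (a ip.1 jq.1 • (1 : Matrix (Fin n) (Fin n) ℂ))
          ((1 / 4 : ℂ) • (B ip.1 jq.1)ᵀ) ((1 / 4 : ℂ) • (C ip.1 jq.1)ᵀ)
          (d ip.1 jq.1 • (1 : Matrix (Fin n) (Fin n) ℂ)) ip.2 jq.2)
      = ∑ s : (Fin n × Fin n) ⊕ Fin 2,
          ((1 : Matrix (Fin k) (Fin k) ℂ) ⊗ₖ myV n s) * M *
            (((1 : Matrix (Fin k) (Fin k) ℂ) ⊗ₖ myV n s))ᴴ := by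
    ext ⟨i, p⟩ ⟨j, q⟩
    rw [Matrix.sum_apply]
    have : ∀ s : (Fin n × Fin n) ⊕ Fin 2,
        (((1 : Matrix (Fin k) (Fin k) ℂ) ⊗ₖ myV n s) * M *
          (((1 : Matrix (Fin k) (Fin k) ℂ) ⊗ₖ myV n s))ᴴ) (i, p) (j, q)
        = (myV n s * Matrix.fromBlocks (a i j • 1) (B i j) (C i j) (d i j • 1) *
            (myV n s)ᴴ) p q := by
      intro s
      rw [kron_conj_entry]
      congr 2
      try (ext r r'; rcases r with r | r <;> rcases r' with r' | r' <;> rfl)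
    simp_rw [this]
    rw [← Matrix.sum_apply, key_s18 n hn4]
    rfl
  rw [heq]
  refine Finset.sum_induction _ _ (fun A B' hA hB' => hA.add hB') Matrix.PosSemidef.zero
    (fun s _ => hpos.mul_mul_conjTranspose_same _)
end
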